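/- arXiv:2212.05540 — 8 statements merged into one kernel-verified Lean document; each statement's English description precedes it below -/
import Mathlib

section
/- Let t ≥ 2 and q ≥ 1 be integers and let G = K_1 ∨ (q·K_t), a graph on qt+1 vertices. Then λ_max(A(G)) = (t−1)/2 + √(qt + (t−1)²/4), λ_min(A(G)) = (t−1)/2 − √(qt + (t−1)²/4), and consequently S(G) = √(4qt + (t−1)²). -/
open Finset SimpleGraph Matrix

attribute [local instance] Classical.propDecidable

/-- `H` is a minor of `G`: there is a family of nonempty, pairwise disjoint, connected
branch sets in `G`, one for each vertex of `H`, such that adjacent vertices of `H`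
have an edge of `G` between their branch sets. -/
def SimpleGraph.IsMinorOf {W V : Type*} (H : SimpleGraph W) (G : SimpleGraph V) : Prop :=
  ∃ φ : W → Set V,
    (∀ w, (φ w).Nonempty) ∧
    (∀ w, (G.induce (φ w)).Connected) ∧
    (Pairwise fun w₁ w₂ => Disjoint (φ w₁) (φ w₂)) ∧
    ∀ ⦃w₁ w₂⦄, H.Adj w₁ w₂ → ∃ v₁ ∈ φ w₁, ∃ v₂ ∈ φ w₂, G.Adj v₁ v₂

/-- `G` has no `K_{2,t}` minor. -/
def K2tMinorFree (t : ℕ) {V : Type*} (G : SimpleGraph V) : Prop :=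
  ¬ (completeBipartiteGraph (Fin 2) (Fin t)).IsMinorOf G

/-- The real adjacency matrix of a graph. -/
noncomputable def adjMat {V : Type*} [Fintype V] (G : SimpleGraph V) : Matrix V V ℝ :=
  fun u v => if G.Adj u v then 1 else 0

/-- The largest adjacency eigenvalue. -/
noncomputable def lamMax {V : Type*} [Fintype V] (G : SimpleGraph V) : ℝ :=
  sSup {μ : ℝ | ∃ z : V → ℝ, z ≠ 0 ∧ adjMat G *ᵥ z = μ • z}

/-- The smallest adjacency eigenvalue. -/
noncomputable def lamMin {V : Type*} [Fintype V] (G : SimpleGraph V) : ℝ :=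
  sInf {μ : ℝ | ∃ z : V → ℝ, z ≠ 0 ∧ adjMat G *ᵥ z = μ • z}

/-- The spread of a graph: difference of extreme adjacency eigenvalues. -/
noncomputable def spread {V : Type*} [Fintype V] (G : SimpleGraph V) : ℝ :=
  lamMax G - lamMin G

/-- The join `G ∨ H` of two graphs. -/
def gJoin {α β : Type*} (G : SimpleGraph α) (H : SimpleGraph β) : SimpleGraph (α ⊕ β) where
  Adj x y :=
    match x, y with
    | Sum.inl a, Sum.inl a' => G.Adj a a'
    | Sum.inl _, Sum.inr _ => True
    | Sum.inr _, Sum.inl _ => True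
    | Sum.inr b, Sum.inr b' => H.Adj b b'
  symm := ⟨by rintro (a | b) (a' | b') h <;> simp_all <;> exact h.symm⟩
  loopless := ⟨by rintro (a | b) h <;> simp_all⟩

/-- The disjoint union of two graphs. -/
def gSum {α β : Type*} (G : SimpleGraph α) (H : SimpleGraph β) : SimpleGraph (α ⊕ β) where
  Adj x y :=
    match x, y with
    | Sum.inl a, Sum.inl a' => G.Adj a a'
    | Sum.inr b, Sum.inr b' => H.Adj b b'
    | _, _ => False
  symm := ⟨by rintro (a | b) (a' | b') h <;> simp_all <;> exact h.symm⟩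
  loopless := ⟨by rintro (a | b) h <;> simp_all⟩

/-- The disjoint union of `ℓ` copies of the complete graph `K_t`. -/
def cliques (ℓ t : ℕ) : SimpleGraph (Fin ℓ × Fin t) where
  Adj x y := x.1 = y.1 ∧ x.2 ≠ y.2
  symm := ⟨fun _ _ ⟨h1, h2⟩ => ⟨h1.symm, h2.symm⟩⟩
  loopless := ⟨fun _ ⟨_, h⟩ => h rfl⟩

/-- The graph `K_1 ∨ (ℓ K_t ∪ m P_1)`. -/
def GExt (t ℓ m : ℕ) : SimpleGraph (Fin 1 ⊕ ((Fin ℓ × Fin t) ⊕ Fin m)) :=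
  gJoin (⊤ : SimpleGraph (Fin 1)) (gSum (cliques ℓ t) (⊥ : SimpleGraph (Fin m)))

/-- The constant `ξ_t` from the paper. -/
noncomputable def xiConst (t : ℕ) : ℤ :=
  if Even t then 2 * ⌊3 * (t : ℚ) / 4 - 1 - ((t : ℚ) - 1) ^ 2 / 9⌋
  else ⌊3 * (t : ℚ) / 2 - 2 - 2 * ((t : ℚ) - 1) ^ 2 / 9⌋

/-- `ℓ₀ = ⌊(2n + ξ_t)/(3t)⌋`. -/
noncomputable def ell0 (t n : ℕ) : ℕ :=
  (⌊(2 * (n : ℚ) + (xiConst t : ℚ)) / (3 * (t : ℚ))⌋).toNat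
lemma mv_inl (t q : ℕ) (z : Fin 1 ⊕ (Fin q × Fin t) → ℝ) (a : Fin 1) :
    (adjMat (gJoin (⊤ : SimpleGraph (Fin 1)) (cliques q t)) *ᵥ z) (Sum.inl a)
      = ∑ p : Fin q × Fin t, z (Sum.inr p) := by
  simp [mulVec, dotProduct, Fintype.sum_sum_type, adjMat, gJoin, cliques, Fin.fin_one_eq_zero]

lemma mv_inr (t q : ℕ) (z : Fin 1 ⊕ (Fin q × Fin t) → ℝ) (i : Fin q) (v : Fin t) :
    (adjMat (gJoin (⊤ : SimpleGraph (Fin 1)) (cliques q t)) *ᵥ z) (Sum.inr (i, v))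
      = z (Sum.inl 0) + ((∑ w : Fin t, z (Sum.inr (i, w))) - z (Sum.inr (i, v))) := by
  simp only [mulVec, dotProduct, Fintype.sum_sum_type, Fintype.sum_prod_type, adjMat, gJoin,
    cliques]
  simp only [Fin.sum_univ_one]
  rw [show ((0:Fin 1)) = 0 from rfl]
  congr 1
  · simp
  · rw [Finset.sum_eq_single i]
    · simp only [eq_self_iff_true, true_and, ite_mul, one_mul, zero_mul]
      have h2 : ∀ w : Fin t, (if v ≠ w then z (Sum.inr (i, w)) else 0)
          = z (Sum.inr (i, w)) - (if w = v then z (Sum.inr (i, w)) else 0) := by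
        intro w; by_cases h' : w = v <;> simp [h'] <;> tauto
      simp only [h2]
      rw [Finset.sum_sub_distrib, Finset.sum_ite_eq' Finset.univ v]
      simp
    · intro b _ hb
      apply Finset.sum_eq_zero
      intro w _
      simp [Ne.symm hb]
    · intro h
      simp at h

lemma eigen_of_root (t q : ℕ) (ht : 2 ≤ t) (hq : 1 ≤ q) (μ : ℝ)
    (hroot : μ ^ 2 - ((t : ℝ) - 1) * μ - q * t = 0) :
    ∃ z : Fin 1 ⊕ (Fin q × Fin t) → ℝ, z ≠ 0 ∧
      adjMat (gJoin (⊤ : SimpleGraph (Fin 1)) (cliques q t)) *ᵥ z = μ • z := by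
  refine ⟨Sum.elim (fun _ => μ - ((t : ℝ) - 1)) (fun _ => 1), ?_, ?_⟩
  · intro h
    have := congrFun h (Sum.inr (⟨0, hq⟩, ⟨0, by omega⟩))
    simp at this
  · funext u
    cases u with
    | inl a =>
      rw [mv_inl]
      simp only [Sum.elim_inr, Sum.elim_inl, Pi.smul_apply, smul_eq_mul]
      rw [Finset.sum_const]
      simp only [Finset.card_univ, Fintype.card_prod, Fintype.card_fin, nsmul_eq_mul]
      push_cast
      nlinarith [hroot]
    | inr p =>
      obtain ⟨i, v⟩ := p
      rw [mv_inr]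
      simp only [Sum.elim_inr, Sum.elim_inl, Pi.smul_apply, smul_eq_mul]
      rw [Finset.sum_const]
      simp only [Finset.card_univ, Fintype.card_fin, nsmul_eq_mul]
      ring

lemma root_of_eigen (t q : ℕ) (ht : 2 ≤ t) (μ : ℝ)
    (h : ∃ z : Fin 1 ⊕ (Fin q × Fin t) → ℝ, z ≠ 0 ∧
      adjMat (gJoin (⊤ : SimpleGraph (Fin 1)) (cliques q t)) *ᵥ z = μ • z) :
    μ = -1 ∨ μ = (t : ℝ) - 1 ∨ μ ^ 2 - ((t : ℝ) - 1) * μ - q * t = 0 := by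
  obtain ⟨z, hz, he⟩ := h
  by_cases h1 : μ = -1
  · exact Or.inl h1
  by_cases h2 : μ = (t : ℝ) - 1
  · exact Or.inr (Or.inl h2)
  refine Or.inr (Or.inr ?_)
  set x := z (Sum.inl 0) with hx
  have eq1 : ∑ p : Fin q × Fin t, z (Sum.inr p) = μ * x := by
    have := congrFun he (Sum.inl 0)
    rw [mv_inl] at this
    simpa using this
  have eq2 : ∀ (i : Fin q) (v : Fin t),
      (μ + 1) * z (Sum.inr (i, v)) = x + ∑ w : Fin t, z (Sum.inr (i, w)) := by
    intro i v
    have := congrFun he (Sum.inr (i, v))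
    rw [mv_inr] at this
    simp only [Pi.smul_apply, smul_eq_mul] at this
    linarith [this]
  have eq3 : ∀ i : Fin q,
      (μ + 1 - t) * (∑ w : Fin t, z (Sum.inr (i, w))) = t * x := by
    intro i
    have hsum := Finset.sum_congr rfl (fun v (_ : v ∈ Finset.univ) => eq2 i v)
    rw [← Finset.mul_sum, Finset.sum_add_distrib, Finset.sum_const] at hsum
    simp only [Finset.card_univ, Fintype.card_fin, nsmul_eq_mul, smul_eq_mul] at hsum
    have hconst : ∑ _v : Fin t, (∑ w : Fin t, z (Sum.inr (i, w)))
        = (t : ℝ) * ∑ w : Fin t, z (Sum.inr (i, w)) := by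
      rw [Finset.sum_const]; simp
    linarith [hsum, hconst]
  by_cases hx0 : x = 0
  · exfalso
    apply hz
    have hs : ∀ i : Fin q, (∑ w : Fin t, z (Sum.inr (i, w))) = 0 := by
      intro i
      have h3 := eq3 i
      rw [hx0, mul_zero] at h3
      have hne : μ + 1 - t ≠ 0 := by
        intro hc; apply h2; linarith
      exact (mul_eq_zero.mp h3).resolve_left hne
    funext u
    cases u with
    | inl a =>
      have : a = 0 := Subsingleton.elim a 0
      rw [this]; simpa using hx0
    | inr p =>
      obtain ⟨i, v⟩ := p
      have h4 := eq2 i v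
      rw [hx0, hs i, add_zero] at h4
      have hne : μ + 1 ≠ 0 := fun hc => h1 (by linarith)
      have := (mul_eq_zero.mp (by linarith [h4] : (μ + 1) * z (Sum.inr (i, v)) = 0)).resolve_left hne
      simpa using this
  · have eqsum : (μ + 1 - t) * (μ * x) = q * (t * x) := by
      rw [← eq1, Fintype.sum_prod_type, Finset.mul_sum]
      rw [Finset.sum_congr rfl (fun i (_ : i ∈ Finset.univ) => eq3 i)]
      rw [Finset.sum_const]
      simp
    have : ((μ + 1 - t) * μ - q * t) * x = 0 := by ring_nf; ring_nf at eqsum; linarith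
    have hfac := (mul_eq_zero.mp this).resolve_right hx0
    nlinarith [hfac]
set_option maxHeartbeats 2000000 in
/-- Eigenvalue formulas for `K_1 ∨ (q K_t)`. -/
theorem eig_join_K1_cliques (t q : ℕ) (ht : 2 ≤ t) (hq : 1 ≤ q) :
    lamMax (gJoin (⊤ : SimpleGraph (Fin 1)) (cliques q t)) =
        ((t : ℝ) - 1) / 2 + Real.sqrt ((q : ℝ) * t + ((t : ℝ) - 1) ^ 2 / 4) ∧
    lamMin (gJoin (⊤ : SimpleGraph (Fin 1)) (cliques q t)) =
        ((t : ℝ) - 1) / 2 - Real.sqrt ((q : ℝ) * t + ((t : ℝ) - 1) ^ 2 / 4) ∧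
    spread (gJoin (⊤ : SimpleGraph (Fin 1)) (cliques q t)) =
        Real.sqrt (4 * (q : ℝ) * t + ((t : ℝ) - 1) ^ 2) := by
  set c : ℝ := ((t : ℝ) - 1) / 2 with hc
  set r : ℝ := Real.sqrt ((q : ℝ) * t + ((t : ℝ) - 1) ^ 2 / 4) with hrdef
  have ht' : (2 : ℝ) ≤ (t : ℝ) := by exact_mod_cast ht
  have hq' : (1 : ℝ) ≤ (q : ℝ) := by exact_mod_cast hq
  have hqt : (t : ℝ) ≤ (q : ℝ) * t := by nlinarith
  have hr0 : 0 ≤ r := Real.sqrt_nonneg _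
  have hr2 : r ^ 2 = (q : ℝ) * t + ((t : ℝ) - 1) ^ 2 / 4 := by
    rw [hrdef, Real.sq_sqrt]; nlinarith
  have hcr : c ≤ r := by nlinarith
  have hcr1 : c + 1 ≤ r := by nlinarith
  -- the eigenvalue set
  set S := {μ : ℝ | ∃ z : Fin 1 ⊕ (Fin q × Fin t) → ℝ, z ≠ 0 ∧
      adjMat (gJoin (⊤ : SimpleGraph (Fin 1)) (cliques q t)) *ᵥ z = μ • z} with hS
  have hmemp : c + r ∈ S := eigen_of_root t q ht hq _ (by
    linear_combination hr2 + (c + 2 * r - ((t : ℝ) - 1) / 2) * hc)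
  have hmemm : c - r ∈ S := eigen_of_root t q ht hq _ (by
    linear_combination hr2 + (c - 2 * r - ((t : ℝ) - 1) / 2) * hc)
  have hbounds : ∀ μ ∈ S, c - r ≤ μ ∧ μ ≤ c + r := by
    intro μ hμ
    rcases root_of_eigen t q ht μ hμ with h | h | h
    · constructor <;> nlinarith
    · constructor <;> nlinarith
    · have hfac : (μ - c - r) * (μ - c + r) = 0 := by
        linear_combination h - hr2 + (c + ((t : ℝ) - 1) / 2 - 2 * μ) * hc
      rcases mul_eq_zero.mp hfac with h' | h'
      · constructor <;> nlinarith
      · constructor <;> nlinarith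
  have hub : ∀ μ ∈ S, μ ≤ c + r := fun μ hμ => (hbounds μ hμ).2
  have hlb : ∀ μ ∈ S, c - r ≤ μ := fun μ hμ => (hbounds μ hμ).1
  have hne : S.Nonempty := ⟨c + r, hmemp⟩
  have hmax : lamMax (gJoin (⊤ : SimpleGraph (Fin 1)) (cliques q t)) = c + r := by
    refine le_antisymm (csSup_le hne hub) (le_csSup ⟨c + r, hub⟩ hmemp)
  have hmin : lamMin (gJoin (⊤ : SimpleGraph (Fin 1)) (cliques q t)) = c - r := by
    refine le_antisymm (csInf_le ⟨c - r, hlb⟩ hmemm) (le_csInf hne hlb)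
  refine ⟨hmax, hmin, ?_⟩
  rw [spread, hmax, hmin]
  rw [show 4 * (q : ℝ) * t + ((t : ℝ) - 1) ^ 2 = (2 * r) ^ 2 by nlinarith,
    Real.sqrt_sq (by positivity)]
  ring
end

section
/- For all integers t ≥ 2 and n ≥ t+1, there exists a K_{2,t}-minor-free graph on n vertices whose spread is at least √(4n + t² − 6t + 1). (Such a graph is obtained as the disjoint union of K_1 ∨ (⌊(n−1)/t⌋ K_t) with n − 1 − t⌊(n−1)/t⌋ isolated vertices.) -/
open Finset SimpleGraph Matrix

attribute [local instance] Classical.propDecidable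

section Spectral
set_option linter.unusedSectionVars false
variable {V : Type} [Fintype V] [DecidableEq V] [Nonempty V] (G : SimpleGraph V)

lemma adjMat_transpose : (adjMat G)ᵀ = adjMat G := by
  ext u v
  simp only [adjMat, Matrix.transpose_apply]
  rw [G.adj_comm]

lemma adjMat_herm : (adjMat G).IsHermitian := by
  ext u v
  simp only [Matrix.conjTranspose_apply, star_trivial]
  exact congrFun (congrFun (adjMat_transpose G) u) v

lemma inner_real (y z : EuclideanSpace ℝ V) :
    (inner ℝ y z : ℝ) = dotProduct (y : V → ℝ) z := by
  simp [PiLp.inner_apply, dotProduct, RCLike.inner_apply, mul_comm]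

lemma rayleigh_expand (x : EuclideanSpace ℝ V) :
    dotProduct (x : V → ℝ) (adjMat G *ᵥ (x : V → ℝ))
      = ∑ i, (adjMat_herm G).eigenvalues i * (inner ℝ x ((adjMat_herm G).eigenvectorBasis i) : ℝ)^2 := by
  set hA := adjMat_herm G
  set b := hA.eigenvectorBasis with hb
  have h1 : dotProduct (x : V → ℝ) (adjMat G *ᵥ (x : V → ℝ))
      = (inner ℝ x (WithLp.toLp 2 (adjMat G *ᵥ x : V → ℝ)) : ℝ) := (inner_real x (WithLp.toLp 2 (adjMat G *ᵥ x : V → ℝ))).symm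
  rw [h1, ← OrthonormalBasis.sum_inner_mul_inner b]
  refine Finset.sum_congr rfl fun i _ => ?_
  have h2 : (inner ℝ (b i) (WithLp.toLp 2 (adjMat G *ᵥ x : V → ℝ)) : ℝ)
      = hA.eigenvalues i * (inner ℝ x (b i) : ℝ) := by
    have hsym : ∀ y z : V → ℝ, dotProduct y (adjMat G *ᵥ z)
        = dotProduct (adjMat G *ᵥ y) z := by
      intro y z
      rw [Matrix.dotProduct_mulVec, ← Matrix.vecMul_transpose, adjMat_transpose G]
    have h3 := inner_real (V := V) (b i) x
    have h4 := inner_real (V := V) (b i) (WithLp.toLp 2 (adjMat G *ᵥ x : V → ℝ))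
    rw [h4]
    calc dotProduct (⇑(b i)) ((adjMat G *ᵥ x : V → ℝ))
        = dotProduct (adjMat G *ᵥ ⇑(b i)) (x : V → ℝ) := hsym _ _
      _ = hA.eigenvalues i * dotProduct (⇑(b i)) (x : V → ℝ) := by
          rw [hA.mulVec_eigenvectorBasis, smul_dotProduct]; rfl
      _ = hA.eigenvalues i * (inner ℝ x (b i) : ℝ) := by
          rw [real_inner_comm (b i) x]
          exact congrArg (hA.eigenvalues i * ·) h3.symm
  rw [h2]; ring

lemma norm_expand (x : EuclideanSpace ℝ V) :
    dotProduct (x : V → ℝ) (x : V → ℝ)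
      = ∑ i, (inner ℝ x ((adjMat_herm G).eigenvectorBasis i) : ℝ)^2 := by
  set b := (adjMat_herm G).eigenvectorBasis
  rw [← inner_real, ← OrthonormalBasis.sum_inner_mul_inner b x x]
  refine Finset.sum_congr rfl fun i _ => ?_
  rw [real_inner_comm (b i) x]; ring

lemma dp_self_pos {z : V → ℝ} (hz : z ≠ 0) : 0 < dotProduct z z := by
  obtain ⟨v, hv⟩ := Function.ne_iff.mp hz
  have : ∀ u ∈ Finset.univ, 0 ≤ z u * z u := fun u _ => mul_self_nonneg _
  refine Finset.sum_pos' this ⟨v, Finset.mem_univ v, ?_⟩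
  exact mul_self_pos.mpr hv

lemma dotProduct_eq_dsum (x : V → ℝ) :
    dotProduct x (adjMat G *ᵥ x) = ∑ u, ∑ v, x u * adjMat G u v * x v := by
  simp [dotProduct, Matrix.mulVec, Finset.mul_sum, mul_assoc]

lemma eigSet_mem (i : V) :
    (adjMat_herm G).eigenvalues i ∈ {μ : ℝ | ∃ z : V → ℝ, z ≠ 0 ∧ adjMat G *ᵥ z = μ • z} := by
  refine ⟨(adjMat_herm G).eigenvectorBasis i, ?_, (adjMat_herm G).mulVec_eigenvectorBasis i⟩
  intro h
  exact (adjMat_herm G).eigenvectorBasis.orthonormal.ne_zero i (by ext v; exact congrFun h v)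

lemma eigSet_bounds {μ : ℝ}
    (hμ : μ ∈ {μ : ℝ | ∃ z : V → ℝ, z ≠ 0 ∧ adjMat G *ᵥ z = μ • z}) :
    Finset.univ.inf' Finset.univ_nonempty (adjMat_herm G).eigenvalues ≤ μ ∧
    μ ≤ Finset.univ.sup' Finset.univ_nonempty (adjMat_herm G).eigenvalues := by
  obtain ⟨z, hz, hAz⟩ := hμ
  have hzz := dp_self_pos hz
  have h1 : dotProduct z (adjMat G *ᵥ z) = μ * dotProduct z z := by
    rw [hAz, dotProduct_smul]; rfl
  have h2 := rayleigh_expand G (WithLp.toLp 2 z : EuclideanSpace ℝ V)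
  have h3 := norm_expand G (WithLp.toLp 2 z : EuclideanSpace ℝ V)
  constructor
  · have : Finset.univ.inf' Finset.univ_nonempty (adjMat_herm G).eigenvalues
        * dotProduct z z ≤ μ * dotProduct z z := by
      rw [← h1, h2, h3, Finset.mul_sum]
      exact Finset.sum_le_sum fun i _ => mul_le_mul_of_nonneg_right
        (Finset.inf'_le _ (Finset.mem_univ i)) (sq_nonneg _)
    exact le_of_mul_le_mul_right this hzz
  · have : μ * dotProduct z z ≤ Finset.univ.sup' Finset.univ_nonempty
        (adjMat_herm G).eigenvalues * dotProduct z z := by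
      rw [← h1, h2, h3, Finset.mul_sum]
      exact Finset.sum_le_sum fun i _ => mul_le_mul_of_nonneg_right
        (Finset.le_sup' _ (Finset.mem_univ i)) (sq_nonneg _)
    exact le_of_mul_le_mul_right this hzz

lemma eigSet_bddAbove :
    BddAbove {μ : ℝ | ∃ z : V → ℝ, z ≠ 0 ∧ adjMat G *ᵥ z = μ • z} :=
  ⟨_, fun _ hμ => (eigSet_bounds G hμ).2⟩

lemma eigSet_bddBelow :
    BddBelow {μ : ℝ | ∃ z : V → ℝ, z ≠ 0 ∧ adjMat G *ᵥ z = μ • z} :=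
  ⟨_, fun _ hμ => (eigSet_bounds G hμ).1⟩

lemma eig_le_lamMax (i : V) : (adjMat_herm G).eigenvalues i ≤ lamMax G :=
  le_csSup (eigSet_bddAbove G) (eigSet_mem G i)

lemma lamMin_le_eig (i : V) : lamMin G ≤ (adjMat_herm G).eigenvalues i :=
  csInf_le (eigSet_bddBelow G) (eigSet_mem G i)

lemma dsum_le_lamMax (x : V → ℝ) :
    ∑ u, ∑ v, x u * adjMat G u v * x v ≤ lamMax G * ∑ v, x v ^ 2 := by
  have h2 := rayleigh_expand G (WithLp.toLp 2 x : EuclideanSpace ℝ V)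
  have h3 := norm_expand G (WithLp.toLp 2 x : EuclideanSpace ℝ V)
  have hx2 : dotProduct x x = ∑ v, x v ^ 2 := by
    simp [dotProduct, sq]
  rw [← dotProduct_eq_dsum, ← hx2, h2, h3, Finset.mul_sum]
  exact Finset.sum_le_sum fun i _ => mul_le_mul_of_nonneg_right
    (eig_le_lamMax G i) (sq_nonneg _)

lemma lamMin_le_dsum (x : V → ℝ) :
    lamMin G * ∑ v, x v ^ 2 ≤ ∑ u, ∑ v, x u * adjMat G u v * x v := by
  have h2 := rayleigh_expand G (WithLp.toLp 2 x : EuclideanSpace ℝ V)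
  have h3 := norm_expand G (WithLp.toLp 2 x : EuclideanSpace ℝ V)
  have hx2 : dotProduct x x = ∑ v, x v ^ 2 := by
    simp [dotProduct, sq]
  rw [← dotProduct_eq_dsum, ← hx2, h2, h3, Finset.mul_sum]
  exact Finset.sum_le_sum fun i _ => mul_le_mul_of_nonneg_right
    (lamMin_le_eig G i) (sq_nonneg _)

end Spectral

section Minor
variable {t ℓ m : ℕ}

abbrev Vty (t ℓ m : ℕ) := Fin 1 ⊕ ((Fin ℓ × Fin t) ⊕ Fin m)

def cliqueSet (t ℓ m : ℕ) (j : Fin ℓ) : Set (Vty t ℓ m) :=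
  {v | ∃ k, v = Sum.inr (Sum.inl (j, k))}

def lab : Vty t ℓ m → Option (Fin ℓ ⊕ Fin m) :=
  Sum.elim (fun _ => none) (Sum.elim (fun p => some (Sum.inl p.1)) (fun i => some (Sum.inr i)))

lemma lab_step {S : Set (Vty t ℓ m)} (h0 : (Sum.inl 0 : Vty t ℓ m) ∉ S)
    {u v : Vty t ℓ m} (hu : u ∈ S) (hv : v ∈ S) (h : (GExt t ℓ m).Adj u v) :
    lab u = lab v := by
  rcases u with z | (p | i)
  · exact absurd (by simpa [Subsingleton.elim z (0 : Fin 1)] using hu) h0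
  · rcases v with z | (q | i')
    · exact absurd (by simpa [Subsingleton.elim z (0 : Fin 1)] using hv) h0
    · obtain ⟨h1, -⟩ : p.1 = q.1 ∧ p.2 ≠ q.2 := h
      simp [lab, h1]
    · exact absurd h (fun h => h)
  · rcases v with z | (q | i')
    · exact absurd (by simpa [Subsingleton.elim z (0 : Fin 1)] using hv) h0
    · exact absurd h (fun h => h)
    · exact absurd h (fun h => h.elim)

lemma conn_label {S : Set (Vty t ℓ m)} (hc : ((GExt t ℓ m).induce S).Connected)
    (h0 : (Sum.inl 0 : Vty t ℓ m) ∉ S) {x y : Vty t ℓ m} (hx : x ∈ S) (hy : y ∈ S) :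
    lab x = lab y := by
  have key : ∀ (a b : S) (w : ((GExt t ℓ m).induce S).Walk a b), lab a.val = lab b.val := by
    intro a b w
    induction w with
    | nil => rfl
    | @cons a c b h p ih => exact (lab_step h0 a.2 c.2 h).trans ih
  exact (hc.preconnected ⟨x, hx⟩ ⟨y, hy⟩).elim fun w => key _ _ w

lemma conn_in_clique {S : Set (Vty t ℓ m)} (hc : ((GExt t ℓ m).induce S).Connected)
    (h0 : (Sum.inl 0 : Vty t ℓ m) ∉ S) {j : Fin ℓ} {k : Fin t}
    (hx : Sum.inr (Sum.inl (j, k)) ∈ S) : S ⊆ cliqueSet t ℓ m j := by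
  intro y hy
  have hl := conn_label hc h0 hx hy
  rcases y with z | (q | i)
  · exact absurd (by simpa [Subsingleton.elim z (0 : Fin 1)] using hy) h0
  · obtain ⟨j', k'⟩ := q
    simp only [lab, Sum.elim_inr, Sum.elim_inl, Option.some.injEq, Sum.inl.injEq] at hl
    exact ⟨k', by rw [hl]⟩
  · simp [lab] at hl
  
lemma cliqueSet_inj {v : Vty t ℓ m} {j j' : Fin ℓ}
    (h : v ∈ cliqueSet t ℓ m j) (h' : v ∈ cliqueSet t ℓ m j') : j = j' := by
  obtain ⟨k, rfl⟩ := h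
  obtain ⟨k', hk'⟩ := h'
  simpa [lab] using congrArg lab hk'

lemma edge_clique {X Y : Set (Vty t ℓ m)}
    (hcX : ((GExt t ℓ m).induce X).Connected) (hcY : ((GExt t ℓ m).induce Y).Connected)
    (h0X : (Sum.inl 0 : Vty t ℓ m) ∉ X) (h0Y : (Sum.inl 0 : Vty t ℓ m) ∉ Y)
    {x y : Vty t ℓ m} (hx : x ∈ X) (hy : y ∈ Y) (hadj : (GExt t ℓ m).Adj x y) :
    ∃ j, X ⊆ cliqueSet t ℓ m j ∧ Y ⊆ cliqueSet t ℓ m j := by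
  rcases x with z | (p | i)
  · exact absurd (by simpa [Subsingleton.elim z (0 : Fin 1)] using hx) h0X
  · rcases y with z | (q | i')
    · exact absurd (by simpa [Subsingleton.elim z (0 : Fin 1)] using hy) h0Y
    · obtain ⟨jp, kp⟩ := p
      obtain ⟨jq, kq⟩ := q
      obtain ⟨h1, -⟩ : jp = jq ∧ kp ≠ kq := hadj
      subst h1
      exact ⟨jp, conn_in_clique hcX h0X hx, conn_in_clique hcY h0Y hy⟩
    · exact absurd hadj (fun h => h)
  · rcases y with z | (q | i')
    · exact absurd (by simpa [Subsingleton.elim z (0 : Fin 1)] using hy) h0Y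
    · exact absurd hadj (fun h => h)
    · exact absurd hadj (fun h => h.elim)

lemma pigeon (htpos : 0 < t) {j : Fin ℓ} (φ : Fin 2 ⊕ Fin t → Set (Vty t ℓ m))
    (I : Finset (Fin 2 ⊕ Fin t)) (hcard : t + 1 ≤ I.card)
    (hne : ∀ i, (φ i).Nonempty)
    (hdisj : Pairwise fun a b => Disjoint (φ a) (φ b))
    (hsub : ∀ i ∈ I, φ i ⊆ cliqueSet t ℓ m j) : False := by
  choose rep hrep using hne
  set κ : (Fin 2 ⊕ Fin t) → Fin t := fun i =>
    if h : ∃ k : Fin t, rep i = Sum.inr (Sum.inl (j, k)) then h.choose else ⟨0, htpos⟩ with hκ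
  have hκspec : ∀ i ∈ I, rep i = Sum.inr (Sum.inl (j, κ i)) := by
    intro i hi
    have h : ∃ k : Fin t, rep i = Sum.inr (Sum.inl (j, k)) := hsub i hi (hrep i)
    rw [hκ]; simp only [dif_pos h]; exact h.choose_spec
  have hinj : Set.InjOn κ I := by
    intro i1 h1 i2 h2 heq
    by_contra hne'
    have : rep i1 = rep i2 := by rw [hκspec i1 h1, hκspec i2 h2, heq]
    exact Set.disjoint_left.mp (hdisj hne') (hrep i1) (this ▸ hrep i2)
  have := Finset.card_le_card_of_injOn κ (fun i _ => Finset.mem_univ (κ i)) hinj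
  simp only [Finset.card_univ, Fintype.card_fin] at this
  omega

theorem gext_minorfree (ht : 2 ≤ t) : K2tMinorFree t (GExt t ℓ m) := by
  rintro ⟨φ, hne, hconn, hdisj, hadj⟩
  set v0 : Vty t ℓ m := Sum.inl 0 with hv0
  have hdisj0 : ∀ w w', w ≠ w' → v0 ∈ φ w → v0 ∉ φ w' := fun w w' hne' hv hv' =>
    Set.disjoint_left.mp (hdisj hne') hv hv'
  have hbip : ∀ (b : Fin 2) (k : Fin t),
      (completeBipartiteGraph (Fin 2) (Fin t)).Adj (Sum.inl b) (Sum.inr k) := by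
    intro b k; simp
  have htpos : 0 < t := by omega
  have k0 : Fin t := ⟨0, htpos⟩
  by_cases hB : ∃ b : Fin 2, v0 ∈ φ (Sum.inl b)
  · obtain ⟨b, hb⟩ := hB
    set b' : Fin 2 := if b = 0 then 1 else 0 with hb'
    have hbb' : (Sum.inl b : Fin 2 ⊕ Fin t) ≠ Sum.inl b' := by
      rw [hb']; rcases Fin.exists_fin_two.mp ⟨b, rfl⟩ with h | h <;> simp [h]
    have h0B' : v0 ∉ φ (Sum.inl b') := hdisj0 _ _ hbb' hb
    have h0C : ∀ k : Fin t, v0 ∉ φ (Sum.inr k) := fun k =>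
      hdisj0 _ _ (by simp) hb
    have hcl : ∀ k : Fin t, ∃ j, φ (Sum.inl b') ⊆ cliqueSet t ℓ m j ∧
        φ (Sum.inr k) ⊆ cliqueSet t ℓ m j := by
      intro k
      obtain ⟨x, hx, y, hy, hxy⟩ := hadj (hbip b' k)
      exact edge_clique (hconn _) (hconn _) h0B' (h0C k) hx hy hxy
    obtain ⟨j, hj1, hj2⟩ := hcl k0
    have hsub : ∀ i ∈ insert (Sum.inl b') (Finset.univ.image (Sum.inr : Fin t → Fin 2 ⊕ Fin t)),
        φ i ⊆ cliqueSet t ℓ m j := by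
      intro i hi
      rcases Finset.mem_insert.mp hi with rfl | hi
      · exact hj1
      · obtain ⟨k, -, rfl⟩ := Finset.mem_image.mp hi
        obtain ⟨jk, hk1, hk2⟩ := hcl k
        obtain ⟨v, hv⟩ := hne (Sum.inl b')
        rwa [← cliqueSet_inj (hk1 hv) (hj1 hv)]
    refine pigeon htpos φ _ ?_ hne hdisj hsub
    rw [Finset.card_insert_of_notMem (by simp), Finset.card_image_of_injective _ Sum.inr_injective]
    simp
  · push_neg at hB
    set F : Finset (Fin t) := Finset.univ.filter (fun k => v0 ∉ φ (Sum.inr k)) with hF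
    have hFc : (Finset.univ.filter (fun k : Fin t => v0 ∈ φ (Sum.inr k))).card ≤ 1 := by
      refine Finset.card_le_one.mpr fun k hk k' hk' => ?_
      by_contra hkk'
      exact hdisj0 _ _ (by simpa using hkk') ((Finset.mem_filter.mp hk).2)
        ((Finset.mem_filter.mp hk').2)
    have hFcard : t ≤ F.card + 1 := by
      have := Finset.card_filter_add_card_filter_not
        (s := (Finset.univ : Finset (Fin t))) (p := fun k => v0 ∈ φ (Sum.inr k))
      simp only [Finset.card_univ, Fintype.card_fin] at this
      have hFeq : F.card = (Finset.univ.filter (fun k : Fin t => ¬ v0 ∈ φ (Sum.inr k))).card := rfl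
      omega
    have hFne : F.Nonempty := by
      rw [← Finset.card_pos]; omega
    obtain ⟨kk0, hkk0⟩ := hFne
    have h0k0 : v0 ∉ φ (Sum.inr kk0) := (Finset.mem_filter.mp hkk0).2
    -- edge between B0 and C k0
    have hclB : ∀ (b : Fin 2) (k : Fin t), v0 ∉ φ (Sum.inr k) →
        ∃ j, φ (Sum.inl b) ⊆ cliqueSet t ℓ m j ∧ φ (Sum.inr k) ⊆ cliqueSet t ℓ m j := by
      intro b k h0k
      obtain ⟨x, hx, y, hy, hxy⟩ := hadj (hbip b k)
      exact edge_clique (hconn _) (hconn _) (hB b) h0k hx hy hxy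
    obtain ⟨j, hj0, hjk0⟩ := hclB 0 kk0 h0k0
    have hB1 : φ (Sum.inl 1) ⊆ cliqueSet t ℓ m j := by
      obtain ⟨j1, hj1, hj1k0⟩ := hclB 1 kk0 h0k0
      obtain ⟨v, hv⟩ := hne (Sum.inr kk0)
      rwa [cliqueSet_inj (hj1k0 hv) (hjk0 hv)] at hj1
    have hsub : ∀ i ∈ ({Sum.inl 0, Sum.inl 1} : Finset (Fin 2 ⊕ Fin t)) ∪ F.image Sum.inr,
        φ i ⊆ cliqueSet t ℓ m j := by
      intro i hi
      rcases Finset.mem_union.mp hi with hi | hi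
      · rcases Finset.mem_insert.mp hi with rfl | hi
        · exact hj0
        · rw [Finset.mem_singleton.mp hi]; exact hB1
      · obtain ⟨k, hk, rfl⟩ := Finset.mem_image.mp hi
        obtain ⟨jk, hjk1, hjk2⟩ := hclB 0 k ((Finset.mem_filter.mp hk).2)
        obtain ⟨v, hv⟩ := hne (Sum.inl 0)
        rwa [← cliqueSet_inj (hjk1 hv) (hj0 hv)]
    refine pigeon htpos φ _ ?_ hne hdisj hsub
    rw [Finset.card_union_of_disjoint (by simp), Finset.card_image_of_injective _ Sum.inr_injective]
    have h2 : ({Sum.inl 0, Sum.inl 1} : Finset (Fin 2 ⊕ Fin t)).card = 2 := by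
      rw [Finset.card_insert_of_notMem (by simp), Finset.card_singleton]
    omega

end Minor

section Sums
variable {t ℓ m : ℕ}

noncomputable def xvec (ℓ t m : ℕ) (a : ℝ) : (Fin 1 ⊕ ((Fin ℓ × Fin t) ⊕ Fin m)) → ℝ :=
  Sum.elim (fun _ => a) (Sum.elim (fun _ => 1) (fun _ => 0))

lemma sum_sq (a : ℝ) : ∑ v, (xvec ℓ t m a) v ^ 2 = a ^ 2 + (ℓ : ℝ) * t := by
  simp [xvec, Fintype.sum_sum_type, Fintype.sum_prod_type, mul_comm]

lemma clique_row (p : Fin ℓ × Fin t) :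
    ∑ q : Fin ℓ × Fin t, (if p.1 = q.1 ∧ p.2 ≠ q.2 then (1:ℝ) else 0) = (t : ℝ) - 1 := by
  rw [Fintype.sum_prod_type]
  have h1 : ∀ j : Fin ℓ, ∑ k : Fin t, (if p.1 = j ∧ p.2 ≠ k then (1:ℝ) else 0)
      = if p.1 = j then (t : ℝ) - 1 else 0 := by
    intro j
    by_cases hj : p.1 = j
    · simp only [hj, true_and, if_pos rfl]
      have : ∀ k : Fin t, (if p.2 ≠ k then (1:ℝ) else 0) = 1 - (if p.2 = k then (1:ℝ) else 0) := by
        intro k; by_cases h : p.2 = k <;> simp [h]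
      rw [Finset.sum_congr rfl (fun k _ => this k), Finset.sum_sub_distrib]
      have ht : 0 < t := p.2.pos
      simp [Finset.sum_ite_eq]
    · simp [hj]
  rw [Finset.sum_congr rfl (fun j _ => h1 j), Finset.sum_ite_eq Finset.univ p.1]
  simp

lemma sum_quad (a : ℝ) :
    ∑ u, ∑ v, (xvec ℓ t m a) u * adjMat (GExt t ℓ m) u v * (xvec ℓ t m a) v
      = 2 * a * ((ℓ : ℝ) * t) + ((ℓ : ℝ) * t) * ((t : ℝ) - 1) := by
  have hrow : ∀ p : Fin ℓ × Fin t,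
      ∑ v, adjMat (GExt t ℓ m) (Sum.inr (Sum.inl p)) v * (xvec ℓ t m a) v
        = a + ((t:ℝ) - 1) := by
    intro p
    rw [Fintype.sum_sum_type]
    have h2 : ∑ w : (Fin ℓ × Fin t) ⊕ Fin m,
        adjMat (GExt t ℓ m) (Sum.inr (Sum.inl p)) (Sum.inr w) * (xvec ℓ t m a) (Sum.inr w)
        = (t : ℝ) - 1 := by
      rw [Fintype.sum_sum_type]
      have hcl : ∀ q : Fin ℓ × Fin t,
          adjMat (GExt t ℓ m) (Sum.inr (Sum.inl p)) (Sum.inr (Sum.inl q)) * (xvec ℓ t m a) (Sum.inr (Sum.inl q))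
          = if p.1 = q.1 ∧ p.2 ≠ q.2 then (1:ℝ) else 0 := by
        intro q
        have : adjMat (GExt t ℓ m) (Sum.inr (Sum.inl p)) (Sum.inr (Sum.inl q))
            = if p.1 = q.1 ∧ p.2 ≠ q.2 then (1:ℝ) else 0 := if_congr Iff.rfl rfl rfl
        rw [this, xvec]; simp
      have hiso : ∀ i : Fin m,
          adjMat (GExt t ℓ m) (Sum.inr (Sum.inl p)) (Sum.inr (Sum.inr i)) * (xvec ℓ t m a) (Sum.inr (Sum.inr i)) = 0 := by
        intro i; simp [xvec]
      rw [Finset.sum_congr rfl (fun q _ => hcl q), Finset.sum_congr rfl (fun i _ => hiso i),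
        clique_row p]
      simp
    have h1 : ∑ z : Fin 1,
        adjMat (GExt t ℓ m) (Sum.inr (Sum.inl p)) (Sum.inl z) * (xvec ℓ t m a) (Sum.inl z) = a := by
      have hone : ∀ z : Fin 1, adjMat (GExt t ℓ m) (Sum.inr (Sum.inl p)) (Sum.inl z) = 1 :=
        fun z => if_pos trivial
      simp [hone, xvec]
    rw [h1, h2]
  have hcenter : ∀ z : Fin 1, ∑ v, adjMat (GExt t ℓ m) (Sum.inl z) v * (xvec ℓ t m a) v
      = (ℓ : ℝ) * t := by
    intro z
    rw [Fintype.sum_sum_type, Fintype.sum_sum_type]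
    have e0 : ∑ z' : Fin 1, adjMat (GExt t ℓ m) (Sum.inl z) (Sum.inl z') * (xvec ℓ t m a) (Sum.inl z') = 0 := by
      have : ∀ z' : Fin 1, adjMat (GExt t ℓ m) (Sum.inl z) (Sum.inl z') = 0 := by
        intro z'
        rw [adjMat, if_neg]
        intro h; exact (h : z ≠ z') (Subsingleton.elim z z')
      simp [this]
    have e1 : ∑ q : Fin ℓ × Fin t, adjMat (GExt t ℓ m) (Sum.inl z) (Sum.inr (Sum.inl q)) * (xvec ℓ t m a) (Sum.inr (Sum.inl q)) = (ℓ:ℝ) * t := by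
      have : ∀ q : Fin ℓ × Fin t, adjMat (GExt t ℓ m) (Sum.inl z) (Sum.inr (Sum.inl q)) * (xvec ℓ t m a) (Sum.inr (Sum.inl q)) = 1 := by
        intro q
        have : adjMat (GExt t ℓ m) (Sum.inl z) (Sum.inr (Sum.inl q)) = 1 := if_pos trivial
        simp [this, xvec]
      rw [Finset.sum_congr rfl (fun q _ => this q)]
      simp [mul_comm]
    have e2 : ∑ i : Fin m, adjMat (GExt t ℓ m) (Sum.inl z) (Sum.inr (Sum.inr i)) * (xvec ℓ t m a) (Sum.inr (Sum.inr i)) = 0 := by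
      simp [xvec]
    rw [e0, e1, e2]; ring
  rw [Fintype.sum_sum_type]
  have T1 : ∑ z : Fin 1, ∑ v, (xvec ℓ t m a) (Sum.inl z) * adjMat (GExt t ℓ m) (Sum.inl z) v * (xvec ℓ t m a) v
      = a * ((ℓ:ℝ) * t) := by
    have : ∀ z : Fin 1, ∑ v, (xvec ℓ t m a) (Sum.inl z) * adjMat (GExt t ℓ m) (Sum.inl z) v * (xvec ℓ t m a) v
        = a * ((ℓ:ℝ)*t) := by
      intro z
      have : ∑ v, (xvec ℓ t m a) (Sum.inl z) * adjMat (GExt t ℓ m) (Sum.inl z) v * (xvec ℓ t m a) v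
          = a * ∑ v, adjMat (GExt t ℓ m) (Sum.inl z) v * (xvec ℓ t m a) v := by
        rw [Finset.mul_sum]; exact Finset.sum_congr rfl fun v _ => by simp [xvec]; ring
      rw [this, hcenter]
    simp [this]
  have T2 : ∑ w : (Fin ℓ × Fin t) ⊕ Fin m, ∑ v, (xvec ℓ t m a) (Sum.inr w) * adjMat (GExt t ℓ m) (Sum.inr w) v * (xvec ℓ t m a) v
      = ((ℓ:ℝ) * t) * (a + ((t:ℝ) - 1)) := by
    rw [Fintype.sum_sum_type]
    have u2 : ∀ i : Fin m, ∑ v, (xvec ℓ t m a) (Sum.inr (Sum.inr i)) * adjMat (GExt t ℓ m) (Sum.inr (Sum.inr i)) v * (xvec ℓ t m a) v = 0 := by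
      intro i; simp [xvec]
    have u1 : ∀ p : Fin ℓ × Fin t, ∑ v, (xvec ℓ t m a) (Sum.inr (Sum.inl p)) * adjMat (GExt t ℓ m) (Sum.inr (Sum.inl p)) v * (xvec ℓ t m a) v
        = a + ((t:ℝ) - 1) := by
      intro p
      have : ∑ v, (xvec ℓ t m a) (Sum.inr (Sum.inl p)) * adjMat (GExt t ℓ m) (Sum.inr (Sum.inl p)) v * (xvec ℓ t m a) v
          = ∑ v, adjMat (GExt t ℓ m) (Sum.inr (Sum.inl p)) v * (xvec ℓ t m a) v := by
        exact Finset.sum_congr rfl fun v _ => by simp [xvec]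
      rw [this, hrow]
    rw [Finset.sum_congr rfl (fun p _ => u1 p), Finset.sum_congr rfl (fun i _ => u2 i)]
    simp
    ring
  rw [T1, T2]; ring

end Sums

set_option maxHeartbeats 1000000 in
/-- For `t ≥ 2` and `n ≥ t+1` there is a `K_{2,t}`-minor-free graph on `n`
vertices with spread at least `√(4n + t² - 6t + 1)`. -/
theorem exists_K2tFree_large_spread (t n : ℕ) (ht : 2 ≤ t) (hn : t + 1 ≤ n) :
    ∃ (V : Type) (inst : Fintype V) (G : SimpleGraph V),
      @Fintype.card V inst = n ∧ K2tMinorFree t G ∧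
      Real.sqrt (4 * (n : ℝ) + (t : ℝ) ^ 2 - 6 * t + 1) ≤ @spread V inst G := by
  have htpos : 0 < t := by omega
  obtain ⟨ℓ, m, hdm, hmlt, hℓ1⟩ : ∃ ℓ m : ℕ, t * ℓ + m = n - 1 ∧ m < t ∧ 1 ≤ ℓ :=
    ⟨(n - 1) / t, (n - 1) % t, Nat.div_add_mod _ _, Nat.mod_lt _ htpos,
      (Nat.one_le_div_iff htpos).mpr (by omega)⟩
  refine ⟨Vty t ℓ m, inferInstance, GExt t ℓ m, ?_, gext_minorfree ht, ?_⟩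
  · have hcm : ℓ * t = t * ℓ := Nat.mul_comm _ _
    simp only [Vty, Fintype.card_sum, Fintype.card_prod, Fintype.card_fin]
    omega
  · -- numeric part
    have hnat : n ≤ t * ℓ + t := by omega
    set Lr : ℝ := (ℓ : ℝ) * t with hLr
    have hLpos : 0 < Lr := by
      have : (1:ℝ) ≤ (ℓ:ℝ) := by exact_mod_cast hℓ1
      have : (0:ℝ) < (t:ℝ) := by exact_mod_cast htpos
      positivity
    have hLn : (n : ℝ) ≤ Lr + t := by
      have : (n : ℝ) ≤ (t : ℝ) * ℓ + t := by exact_mod_cast hnat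
      rw [hLr]; linarith [this]
    set D : ℝ := ((t:ℝ) - 1)^2 + 4 * Lr with hD
    have hD0 : 0 ≤ D := by positivity
    set s : ℝ := Real.sqrt D with hsdef
    have hs2 : s^2 = D := Real.sq_sqrt hD0
    have hs0 : 0 ≤ s := Real.sqrt_nonneg D
    -- upper eigenvector
    have hmax : ((t:ℝ) - 1 + s) / 2 ≤ lamMax (GExt t ℓ m) := by
      set a : ℝ := (s - ((t:ℝ) - 1)) / 2 with ha
      have h1 := dsum_le_lamMax (GExt t ℓ m) (xvec ℓ t m a)
      rw [sum_quad, sum_sq] at h1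
      have hP : 0 < a^2 + Lr := by positivity
      have hid : ((t:ℝ) - 1 + s) / 2 * (a^2 + Lr) = 2 * a * Lr + Lr * ((t:ℝ) - 1) := by
        rw [ha]; nlinarith [hs2]
      have h2 : ((t:ℝ) - 1 + s) / 2 * (a^2 + Lr) ≤ lamMax (GExt t ℓ m) * (a^2 + Lr) := by
        rw [hid]
        calc 2 * a * Lr + Lr * ((t:ℝ) - 1)
            = 2 * a * ((ℓ:ℝ) * t) + ((ℓ:ℝ) * t) * ((t:ℝ) - 1) := by rw [hLr]
          _ ≤ lamMax (GExt t ℓ m) * (a ^ 2 + (ℓ:ℝ) * t) := h1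
          _ = lamMax (GExt t ℓ m) * (a^2 + Lr) := by rw [hLr]
      exact le_of_mul_le_mul_right h2 hP
    have hmin : lamMin (GExt t ℓ m) ≤ ((t:ℝ) - 1 - s) / 2 := by
      set a : ℝ := (-s - ((t:ℝ) - 1)) / 2 with ha
      have h1 := lamMin_le_dsum (GExt t ℓ m) (xvec ℓ t m a)
      rw [sum_quad, sum_sq] at h1
      have hP : 0 < a^2 + Lr := by positivity
      have hid : ((t:ℝ) - 1 - s) / 2 * (a^2 + Lr) = 2 * a * Lr + Lr * ((t:ℝ) - 1) := by
        rw [ha]; nlinarith [hs2]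
      have h2 : lamMin (GExt t ℓ m) * (a^2 + Lr) ≤ ((t:ℝ) - 1 - s) / 2 * (a^2 + Lr) := by
        rw [hid]
        calc lamMin (GExt t ℓ m) * (a^2 + Lr)
            = lamMin (GExt t ℓ m) * (a ^ 2 + (ℓ:ℝ) * t) := by rw [hLr]
          _ ≤ 2 * a * ((ℓ:ℝ) * t) + ((ℓ:ℝ) * t) * ((t:ℝ) - 1) := h1
          _ = 2 * a * Lr + Lr * ((t:ℝ) - 1) := by rw [hLr]
      exact le_of_mul_le_mul_right h2 hP
    have hspread : s ≤ spread (GExt t ℓ m) := by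
      rw [spread]
      have : ((t:ℝ) - 1 + s) / 2 - ((t:ℝ) - 1 - s) / 2 = s := by ring
      linarith [hmax, hmin]
    have hfin : 4 * (n : ℝ) + (t : ℝ) ^ 2 - 6 * t + 1 ≤ D := by
      rw [hD]
      nlinarith [hLn]
    have hfin2 : Real.sqrt (4 * (n : ℝ) + (t : ℝ) ^ 2 - 6 * t + 1) ≤ s := by
      rw [hsdef]
      exact Real.sqrt_le_sqrt hfin
    exact le_trans hfin2 hspread
end

section
/- Let t ≥ 2 and let G be a K_{2,t}-minor-free graph. Let λ ≤ 0 be a real eigenvalue of the adjacency matrix A(G) with eigenvector z. Then for every vertex u with z_u > 0, λ² z_u ≤ d(u) z_u + (t−1) Σ_{y : z_y > 0} z_y, and for every vertex u with z_u < 0, λ² |z_u| ≤ d(u) |z_u| + (t−1) Σ_{y : z_y < 0} |z_y|, where d(u) denotes the degree of u in G. -/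
open Finset SimpleGraph Matrix

attribute [local instance] Classical.propDecidable

lemma singleton_connected {V : Type} (G : SimpleGraph V) (v : V) :
    (G.induce ({v} : Set V)).Connected := by
  have hne : Nonempty ({v} : Set V) := ⟨⟨v, rfl⟩⟩
  refine Connected.mk (fun a b => ?_)
  have : a = b := Subtype.ext (a.2.trans b.2.symm)
  rw [this]

lemma common_nbr_bound (t : ℕ) (ht : 1 ≤ t) {V : Type} [Fintype V] (G : SimpleGraph V)
    (hG : K2tMinorFree t G) {u w : V} (huw : u ≠ w) :
    (Finset.univ.filter (fun v => G.Adj u v ∧ G.Adj w v)).card ≤ t - 1 := by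
  by_contra hcon
  have hcard : t ≤ (Finset.univ.filter (fun v => G.Adj u v ∧ G.Adj w v)).card := by omega
  obtain ⟨s, hs, hst⟩ := Finset.exists_subset_card_eq hcard
  let e : Fin t ≃ s := (s.equivFin.trans (finCongr hst)).symm
  let f : Fin t → V := fun i => (e i : V)
  have hfinj : Function.Injective f := fun i j h => e.injective (Subtype.ext h)
  have hfadj : ∀ i, G.Adj u (f i) ∧ G.Adj w (f i) := by
    intro i
    have := hs (e i).2
    simpa using Finset.mem_filter.mp this |>.2
  set g : Fin 2 → V := fun i => if i = 0 then u else w with hg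
  have hgadj : ∀ i j, G.Adj (g i) (f j) := by
    intro i j
    by_cases h : i = 0
    · simpa [hg, h] using (hfadj j).1
    · simpa [hg, h] using (hfadj j).2
  have hginj : Function.Injective g := by
    intro i i' h
    fin_cases i <;> fin_cases i' <;>
      first | rfl | (exfalso; apply huw; simpa [hg] using h) | (exfalso; apply huw; simpa [hg] using h.symm)
  apply hG
  refine ⟨fun x => match x with
    | Sum.inl i => {g i}
    | Sum.inr j => {f j}, ?_, ?_, ?_, ?_⟩
  · rintro (i | j) <;> exact ⟨_, rfl⟩
  · rintro (i | j)
    · exact singleton_connected G (g i)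
    · exact singleton_connected G (f j)
  · rintro (i | j) (i' | j') hne
    · show Disjoint ({g i} : Set V) {g i'}
      have : i ≠ i' := fun h => hne (by rw [h])
      simpa using fun h => this (hginj h)
    · show Disjoint ({g i} : Set V) {f j'}
      simpa using (hgadj i j').ne
    · show Disjoint ({f j} : Set V) {g i'}
      simpa using (hgadj i' j).ne'
    · show Disjoint ({f j} : Set V) {f j'}
      have : j ≠ j' := fun h => hne (by rw [h])
      simpa using fun h => this (hfinj h)
  · rintro (i | j) (i' | j') hadj
    · simp at hadj
    · exact ⟨g i, rfl, f j', rfl, hgadj i j'⟩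
    · exact ⟨f j, rfl, g i', rfl, (hgadj i' j).symm⟩
    · simp at hadj

lemma pos_case (t : ℕ) (ht : 2 ≤ t) {V : Type} [Fintype V]
    (G : SimpleGraph V) (hG : K2tMinorFree t G)
    (lam : ℝ) (z : V → ℝ) (heig : adjMat G *ᵥ z = lam • z)
    (u : V) (hu : 0 < z u) :
    lam ^ 2 * z u ≤ (G.degree u : ℝ) * z u +
      ((t : ℝ) - 1) * ∑ y ∈ Finset.univ.filter (fun y => 0 < z y), z y := by
  classical
  set c : V → ℕ := fun w => (Finset.univ.filter (fun v => G.Adj u v ∧ G.Adj w v)).card with hc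
  -- the double eigenvector equation
  have h2 : adjMat G *ᵥ (adjMat G *ᵥ z) = (lam ^ 2) • z := by
    rw [heig, Matrix.mulVec_smul, heig, smul_smul, pow_two]
  have hAA : ∀ w, ∑ v, adjMat G u v * adjMat G v w = (c w : ℝ) := by
    intro w
    have : ∀ v, adjMat G u v * adjMat G v w
        = if G.Adj u v ∧ G.Adj w v then (1 : ℝ) else 0 := by
      intro v
      by_cases h1 : G.Adj u v <;> by_cases h2 : G.Adj v w <;>
        simp [adjMat, h1, h2, G.adj_comm w v]
    rw [Finset.sum_congr rfl (fun v _ => this v), Finset.sum_boole, hc]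
  have key : lam ^ 2 * z u = ∑ w, (c w : ℝ) * z w := by
    have hl : (adjMat G *ᵥ (adjMat G *ᵥ z)) u = lam ^ 2 * z u := by
      rw [h2]; simp
    rw [← hl]
    show ∑ v, adjMat G u v * (∑ w, adjMat G v w * z w) = _
    simp_rw [Finset.mul_sum, ← mul_assoc]
    rw [Finset.sum_comm]
    simp_rw [← Finset.sum_mul, hAA]
  have hcu : (c u : ℝ) = (G.degree u : ℝ) := by
    congr 1
    rw [hc]
    simp only [and_self]
    rw [← SimpleGraph.neighborFinset_eq_filter, SimpleGraph.degree]
  -- split off the u term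
  have hsplit : ∑ w, (c w : ℝ) * z w
      = (c u : ℝ) * z u + ∑ w ∈ Finset.univ.erase u, (c w : ℝ) * z w := by
    rw [add_comm, Finset.sum_erase_add _ _ (Finset.mem_univ u)]
  set F : V → ℝ := fun w => if 0 < z w then ((t : ℝ) - 1) * z w else 0 with hF
  have hFnonneg : ∀ w, 0 ≤ F w := by
    intro w
    rw [hF]
    dsimp only
    split_ifs with h
    · have h1 : (1 : ℝ) ≤ (t : ℝ) := by exact_mod_cast Nat.one_le_of_lt ht
      exact mul_nonneg (by linarith) h.le
    · exact le_refl 0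
  have hbound : ∑ w ∈ Finset.univ.erase u, (c w : ℝ) * z w ≤ ∑ w, F w := by
    refine le_trans (Finset.sum_le_sum ?_) (Finset.sum_le_sum_of_subset_of_nonneg
      (Finset.subset_univ _) (fun w _ _ => hFnonneg w))
    intro w hw
    have hwne : w ≠ u := Finset.ne_of_mem_erase hw
    rw [hF]; dsimp only
    split_ifs with hzw
    · have hcw : c w ≤ t - 1 := common_nbr_bound t (by omega) G hG hwne.symm
      have : (c w : ℝ) ≤ (t : ℝ) - 1 := by
        have := Nat.cast_le (α := ℝ) |>.mpr hcw
        rwa [Nat.cast_sub (by omega), Nat.cast_one] at this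
      exact mul_le_mul_of_nonneg_right this hzw.le
    · exact mul_nonpos_of_nonneg_of_nonpos (Nat.cast_nonneg _) (le_of_not_gt hzw)
  have hFsum : ∑ w, F w = ((t : ℝ) - 1) * ∑ y ∈ Finset.univ.filter (fun y => 0 < z y), z y := by
    rw [hF, Finset.mul_sum, Finset.sum_filter]
  calc lam ^ 2 * z u = (c u : ℝ) * z u + ∑ w ∈ Finset.univ.erase u, (c w : ℝ) * z w := by
        rw [key, hsplit]
    _ ≤ (G.degree u : ℝ) * z u + ((t : ℝ) - 1) * ∑ y ∈ Finset.univ.filter (fun y => 0 < z y), z y := by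
        rw [hcu]
        exact add_le_add le_rfl (hbound.trans_eq hFsum)

/-- Local estimates for an eigenvector of a nonpositive eigenvalue of a
`K_{2,t}`-minor-free graph. -/
theorem nonpos_eigenvalue_local_bound (t : ℕ) (ht : 2 ≤ t) {V : Type} [Fintype V]
    (G : SimpleGraph V) (hG : K2tMinorFree t G)
    (lam : ℝ) (hlam : lam ≤ 0) (z : V → ℝ) (hz : z ≠ 0)
    (heig : adjMat G *ᵥ z = lam • z) :
    (∀ u : V, 0 < z u →
      lam ^ 2 * z u ≤ (G.degree u : ℝ) * z u +
        ((t : ℝ) - 1) * ∑ y ∈ Finset.univ.filter (fun y => 0 < z y), z y) ∧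
    (∀ u : V, z u < 0 →
      lam ^ 2 * |z u| ≤ (G.degree u : ℝ) * |z u| +
        ((t : ℝ) - 1) * ∑ y ∈ Finset.univ.filter (fun y => z y < 0), |z y|) := by
  constructor
  · intro u hu
    exact pos_case t ht G hG lam z heig u hu
  · intro u hu
    have heig' : adjMat G *ᵥ (-z) = lam • (-z) := by
      rw [Matrix.mulVec_neg, heig, smul_neg]
    have hu' : 0 < (-z) u := by simpa using neg_pos.mpr hu
    have h := pos_case t ht G hG lam (-z) heig' u hu'
    have habs : |z u| = (-z) u := by simp [abs_of_neg hu]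
    have hfil : Finset.univ.filter (fun y => 0 < (-z) y)
        = Finset.univ.filter (fun y => z y < 0) := by
      apply Finset.filter_congr
      intro y _
      simp
    have hsum : ∑ y ∈ Finset.univ.filter (fun y => 0 < (-z) y), (-z) y
        = ∑ y ∈ Finset.univ.filter (fun y => z y < 0), |z y| := by
      rw [hfil]
      refine Finset.sum_congr rfl (fun y hy => ?_)
      have : z y < 0 := by simpa using (Finset.mem_filter.mp hy).2
      simp [abs_of_neg this]
    rw [habs]
    calc lam ^ 2 * (-z) u
        ≤ (G.degree u : ℝ) * (-z) u
          + ((t : ℝ) - 1) * ∑ y ∈ Finset.univ.filter (fun y => 0 < (-z) y), (-z) y := h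
      _ = (G.degree u : ℝ) * (-z) u
          + ((t : ℝ) - 1) * ∑ y ∈ Finset.univ.filter (fun y => z y < 0), |z y| := by rw [hsum]
end

section
/- Let t ≥ 2 be an integer, C1 > 0, and let G be a K_{2,t}-minor-free graph on n vertices having a vertex w0 with degree d(w0) ≥ n − C1√n such that every vertex u ≠ w0 has degree d(u) ≤ 2C1√n. Then for every vertex v ≠ w0, the number of ordered pairs (s,u) of vertices with s ∈ N(v)∖{w0} and u ∈ N(s)∖{w0} is at most (5t−1)·C1·√n. -/
open Finset SimpleGraph Matrix

attribute [local instance] Classical.propDecidable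

lemma connected_induce_singleton {V : Type} (G : SimpleGraph V) (a : V) :
    (G.induce ({a} : Set V)).Connected := by
  haveI : Unique ({a} : Set V) := Set.uniqueSingleton a
  haveI : Nonempty ({a} : Set V) := ⟨⟨a, rfl⟩⟩
  exact ⟨fun x y => by
    have h := Subsingleton.elim x y
    subst h
    exact SimpleGraph.Reachable.refl x⟩

lemma common_nbrs_lt {V : Type} [Fintype V] {t : ℕ} (ht : 1 ≤ t) {G : SimpleGraph V}
    (hG : K2tMinorFree t G) {a b : V} (hab : a ≠ b) :
    (G.neighborFinset a ∩ G.neighborFinset b).card < t := by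
  by_contra h
  push_neg at h
  obtain ⟨s, hs_sub, hs_card⟩ := Finset.exists_subset_card_eq h
  set f : Fin t → V := fun i => (s.equivFin.symm (Fin.cast hs_card.symm i) : V) with hf
  have hfs : ∀ i, f i ∈ s := fun i => (s.equivFin.symm (Fin.cast hs_card.symm i)).2
  have hfa : ∀ i, G.Adj a (f i) := by
    intro i
    have := hs_sub (hfs i)
    rw [Finset.mem_inter, SimpleGraph.mem_neighborFinset, SimpleGraph.mem_neighborFinset] at this
    exact this.1
  have hfb : ∀ i, G.Adj b (f i) := by
    intro i
    have := hs_sub (hfs i)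
    rw [Finset.mem_inter, SimpleGraph.mem_neighborFinset, SimpleGraph.mem_neighborFinset] at this
    exact this.2
  have hfinj : Function.Injective f := by
    intro i j hij
    have h2 : s.equivFin.symm (Fin.cast hs_card.symm i) = s.equivFin.symm (Fin.cast hs_card.symm j) :=
      Subtype.ext hij
    have h3 := s.equivFin.symm.injective h2
    have h4 := congrArg Fin.val h3
    rw [Fin.coe_cast, Fin.coe_cast] at h4
    exact Fin.ext h4
  set g : Fin 2 → V := ![a, b] with hg
  have hgadj : ∀ j i, G.Adj (g j) (f i) := by
    intro j i
    fin_cases j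
    · exact hfa i
    · exact hfb i
  have hginj : Function.Injective g := by
    intro j j' hjj
    fin_cases j <;> fin_cases j' <;>
      first
      | rfl
      | exact absurd hjj hab
      | exact absurd hjj.symm hab
  apply hG
  refine ⟨Sum.elim (fun j : Fin 2 => ({g j} : Set V)) (fun i : Fin t => {f i}),
      ?_, ?_, ?_, ?_⟩
  · rintro (j | i) <;> simp
  · rintro (j | i)
    · exact connected_induce_singleton G (g j)
    · exact connected_induce_singleton G (f i)
  · rintro (j | i) (j' | i') hne <;>
      simp only [Sum.elim_inl, Sum.elim_inr, Set.disjoint_singleton]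
    · exact fun hh => hne (congrArg Sum.inl (hginj hh))
    · exact (hgadj j i').ne
    · exact (hgadj j' i).ne'
    · exact fun hh => hne (congrArg Sum.inr (hfinj hh))
  · rintro (j | i) (j' | i') hadj <;> simp at hadj
    · exact ⟨g j, by simp, f i', by simp, hgadj j i'⟩
    · exact ⟨f i, by simp, g j', by simp, (hgadj j' i).symm⟩

/-- Counting walks of length two avoiding the dominant vertex `w₀`. -/
theorem count_pairs_avoiding_w0 (t : ℕ) (ht : 2 ≤ t) (C1 : ℝ) (hC1 : 0 < C1)
    {V : Type} [Fintype V] (n : ℕ) (G : SimpleGraph V) (hcard : Fintype.card V = n)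
    (hG : K2tMinorFree t G) (w0 : V)
    (hw0 : (n : ℝ) - C1 * Real.sqrt n ≤ (G.degree w0 : ℝ))
    (hdeg : ∀ u : V, u ≠ w0 → (G.degree u : ℝ) ≤ 2 * C1 * Real.sqrt n)
    (v : V) (hv : v ≠ w0) :
    ((Finset.univ.filter (fun p : V × V =>
        G.Adj v p.1 ∧ p.1 ≠ w0 ∧ G.Adj p.1 p.2 ∧ p.2 ≠ w0)).card : ℝ)
      ≤ (5 * (t : ℝ) - 1) * C1 * Real.sqrt n := by
  classical
  have ht1 : 1 ≤ t := le_trans (by norm_num) ht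
  set P : Finset (V × V) := Finset.univ.filter (fun p : V × V =>
      G.Adj v p.1 ∧ p.1 ≠ w0 ∧ G.Adj p.1 p.2 ∧ p.2 ≠ w0) with hP
  set P1 : Finset (V × V) := P.filter (fun p => G.Adj w0 p.2) with hP1def
  set P2 : Finset (V × V) := P.filter (fun p => ¬ G.Adj w0 p.2) with hP2def
  have hsplit : P1.card + P2.card = P.card :=
    Finset.card_filter_add_card_filter_not _
  -- the set of non-neighbors of w0 other than w0
  set U : Finset V := Finset.univ.filter (fun u => u ≠ w0 ∧ ¬ G.Adj w0 u) with hU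
  -- Bound on P1
  have hP1bound : P1.card ≤ (t - 1) * G.degree v := by
    have hsub : P1 ⊆ ((G.neighborFinset v).erase w0).biUnion
        (fun s => {s} ×ˢ (G.neighborFinset s ∩ G.neighborFinset w0)) := by
      intro p hp
      simp only [hP1def, hP, Finset.mem_filter, Finset.mem_univ, true_and] at hp
      obtain ⟨⟨h1, h2, h3, h4⟩, h5⟩ := hp
      rw [Finset.mem_biUnion]
      exact ⟨p.1, Finset.mem_erase.2 ⟨h2, (SimpleGraph.mem_neighborFinset _ _ _).2 h1⟩,
        Finset.mem_product.2 ⟨Finset.mem_singleton_self _,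
          Finset.mem_inter.2 ⟨(SimpleGraph.mem_neighborFinset _ _ _).2 h3,
            (SimpleGraph.mem_neighborFinset _ _ _).2 h5⟩⟩⟩
    calc P1.card ≤ ∑ s ∈ (G.neighborFinset v).erase w0,
          ({s} ×ˢ (G.neighborFinset s ∩ G.neighborFinset w0)).card :=
        le_trans (Finset.card_le_card hsub) (Finset.card_biUnion_le)
      _ ≤ ∑ s ∈ (G.neighborFinset v).erase w0, (t - 1) := by
          apply Finset.sum_le_sum
          intro s hs
          have hsne : s ≠ w0 := (Finset.mem_erase.1 hs).1
          have := common_nbrs_lt ht1 hG hsne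
          simp only [Finset.card_product, Finset.card_singleton, one_mul]
          omega
      _ = ((G.neighborFinset v).erase w0).card * (t - 1) := by
          rw [Finset.sum_const, smul_eq_mul]
      _ ≤ G.degree v * (t - 1) :=
          Nat.mul_le_mul_right _ (le_trans (Finset.card_erase_le) le_rfl)
      _ = (t - 1) * G.degree v := Nat.mul_comm _ _
  -- Bound on P2
  have hP2bound : P2.card ≤ (t - 1) * U.card + G.degree v := by
    set B : V → Finset V := fun u =>
      if u = v then G.neighborFinset v else G.neighborFinset v ∩ G.neighborFinset u with hB
    have hsub : P2 ⊆ U.biUnion (fun u => (B u) ×ˢ {u}) := by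
      intro p hp
      simp only [hP2def, hP, Finset.mem_filter, Finset.mem_univ, true_and] at hp
      obtain ⟨⟨h1, h2, h3, h4⟩, h5⟩ := hp
      rw [Finset.mem_biUnion]
      refine ⟨p.2, by simp [hU, h4, h5], Finset.mem_product.2 ⟨?_, Finset.mem_singleton_self _⟩⟩
      by_cases hpv : p.2 = v
      · simp [hB, hpv, SimpleGraph.mem_neighborFinset, h1]
      · simp only [hB, hpv, if_false, Finset.mem_inter, SimpleGraph.mem_neighborFinset]
        exact ⟨h1, h3.symm⟩
    calc P2.card ≤ ∑ u ∈ U, ((B u) ×ˢ ({u} : Finset V)).card :=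
        le_trans (Finset.card_le_card hsub) (Finset.card_biUnion_le)
      _ = ∑ u ∈ U, (B u).card := by
          apply Finset.sum_congr rfl
          intro u _
          simp [Finset.card_product]
      _ ≤ ∑ u ∈ U, ((t - 1) + if u = v then G.degree v else 0) := by
          apply Finset.sum_le_sum
          intro u _
          by_cases huv : u = v
          · rw [hB]
            simp only [huv, if_pos rfl]
            exact Nat.le_add_left _ _
          · simp only [hB, huv, if_false, add_zero]
            have := common_nbrs_lt ht1 hG (fun h : v = u => huv h.symm)
            omega
      _ = U.card * (t - 1) + ∑ u ∈ U, (if u = v then G.degree v else 0) := by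
          rw [Finset.sum_add_distrib, Finset.sum_const, smul_eq_mul]
      _ ≤ U.card * (t - 1) + G.degree v := by
          gcongr
          rw [Finset.sum_ite_eq' U v (fun _ => G.degree v)]
          split <;> omega
      _ = (t - 1) * U.card + G.degree v := by rw [Nat.mul_comm]
  -- Bound on U.card
  have hUn : U.card + G.degree w0 ≤ n := by
    have hdisj : Disjoint U (G.neighborFinset w0) := by
      rw [Finset.disjoint_left]
      intro u hu hu'
      rw [SimpleGraph.mem_neighborFinset] at hu'
      simp only [hU, Finset.mem_filter] at hu
      exact hu.2.2 hu'
    have : (U ∪ G.neighborFinset w0).card ≤ Fintype.card V :=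
      le_trans (Finset.card_le_card (Finset.subset_univ _)) (by rw [Finset.card_univ])
    rw [Finset.card_union_of_disjoint hdisj] at this
    rw [← hcard]
    exact this
  -- Pass to the reals
  have hsq : (0:ℝ) ≤ C1 * Real.sqrt n := by positivity
  have hUreal : (U.card : ℝ) ≤ C1 * Real.sqrt n := by
    have h1 : (U.card : ℝ) + (G.degree w0 : ℝ) ≤ (n : ℝ) := by exact_mod_cast hUn
    linarith
  have hdv : (G.degree v : ℝ) ≤ 2 * C1 * Real.sqrt n := hdeg v hv
  have hPc : (P.card : ℝ) ≤ ((t:ℝ) - 1) * (G.degree v) + (((t:ℝ) - 1) * U.card + G.degree v) := by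
    have h1 : (P1.card : ℝ) ≤ ((t - 1 : ℕ) : ℝ) * (G.degree v) := by exact_mod_cast hP1bound
    have h2 : (P2.card : ℝ) ≤ ((t - 1 : ℕ) : ℝ) * U.card + G.degree v := by exact_mod_cast hP2bound
    have hc : ((t - 1 : ℕ) : ℝ) = (t : ℝ) - 1 := by
      have : (1:ℕ) ≤ t := ht1
      push_cast [this]
      ring
    rw [hc] at h1 h2
    have h3 : (P.card : ℝ) = (P1.card : ℝ) + (P2.card : ℝ) := by exact_mod_cast hsplit.symm
    linarith
  have ht2 : (2:ℝ) ≤ (t:ℝ) := by exact_mod_cast ht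
  have hUnn : (0:ℝ) ≤ (U.card : ℝ) := Nat.cast_nonneg _
  have hdnn : (0:ℝ) ≤ (G.degree v : ℝ) := Nat.cast_nonneg _
  calc ((Finset.univ.filter (fun p : V × V =>
        G.Adj v p.1 ∧ p.1 ≠ w0 ∧ G.Adj p.1 p.2 ∧ p.2 ≠ w0)).card : ℝ)
      = (P.card : ℝ) := by rw [hP]
    _ ≤ ((t:ℝ) - 1) * (G.degree v) + (((t:ℝ) - 1) * U.card + G.degree v) := hPc
    _ ≤ (5 * (t : ℝ) - 1) * C1 * Real.sqrt n := by
        nlinarith [mul_le_mul_of_nonneg_left hdv (by linarith : (0:ℝ) ≤ (t:ℝ) - 1),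
          mul_le_mul_of_nonneg_left hUreal (by linarith : (0:ℝ) ≤ (t:ℝ) - 1)]
end

section
/- Let G be a graph on n ≥ 2 vertices with a vertex u0 adjacent to all other vertices, let H = G − u0 with adjacency matrix A_H, and let 1 denote the all-ones vector indexed by V(H). Let λ be a real eigenvalue of A(G) such that |λ| is strictly greater than the spectral radius of A_H and such that A(G) has an eigenvector α for λ with α_{u0} = 1. Then λ² = (n−1) + Σ_{k=1}^∞ λ^{−k} (1ᵀ A_H^k 1), where the series converges. -/
open Finset SimpleGraph Matrix

attribute [local instance] Classical.propDecidable

/-- The equation `λ² = (n−1) + Σ_{k≥1} λ^{−k} (1ᵀ A_H^k 1)` for an eigenvalue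
`λ` of `A(G)` with `|λ|` exceeding the spectral radius of `A_H`, where `H = G − u₀` and `u₀`
is a dominating vertex. -/
theorem eigenvalue_walk_series {V : Type} [Fintype V] (n : ℕ) (hn : 2 ≤ n)
    (G : SimpleGraph V) (hcard : Fintype.card V = n)
    (u0 : V) (hu0 : ∀ v : V, v ≠ u0 → G.Adj u0 v)
    (lam : ℝ) (α : V → ℝ) (hα : α u0 = 1)
    (heig : adjMat G *ᵥ α = lam • α)
    (hspec : ∀ (μ : ℝ) (z : {v : V | v ≠ u0} → ℝ), z ≠ 0 →
      adjMat (G.induce {v : V | v ≠ u0}) *ᵥ z = μ • z → |μ| < |lam|) :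
    HasSum
      (fun k : ℕ => (lam ^ (k + 1))⁻¹ *
        ((fun _ => (1 : ℝ)) ⬝ᵥ
          ((adjMat (G.induce {v : V | v ≠ u0}) ^ (k + 1)) *ᵥ (fun _ => (1 : ℝ)))))
      (lam ^ 2 - ((n : ℝ) - 1)) := by
  classical
  set A : Matrix {v : V | v ≠ u0} {v : V | v ≠ u0} ℝ :=
    adjMat (G.induce {v : V | v ≠ u0}) with hAdef
  set one : {v : V | v ≠ u0} → ℝ := fun _ => (1 : ℝ) with honedef
  set β : {v : V | v ≠ u0} → ℝ := fun v => α v with hβdef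
  have hadjA : ∀ v w : {v : V | v ≠ u0},
      A v w = if G.Adj (v : V) (w : V) then 1 else 0 := by
    intro v w
    simp [hAdef, adjMat, SimpleGraph.comap_adj, SimpleGraph.induce]
  have key : ∀ v : V, ∑ w, (if G.Adj v w then 1 else 0) * α w = lam * α v := by
    intro v
    have := congrFun heig v
    simpa [adjMat, Matrix.mulVec, dotProduct, Pi.smul_apply, smul_eq_mul] using this
  have hsplit : ∀ f : V → ℝ,
      ∑ w : V, f w = f u0 + ∑ w : {v : V | v ≠ u0}, f (w : V) := by
    intro f
    rw [← Finset.add_sum_erase Finset.univ f (Finset.mem_univ u0)]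
    congr 1
    exact Finset.sum_subtype (Finset.univ.erase u0)
      (fun x => by simp [Set.mem_setOf_eq]) f
  have h1 : A *ᵥ β = lam • β - one := by
    funext v
    have hv := key (v : V)
    rw [hsplit] at hv
    have hadj : G.Adj (v : V) u0 := (hu0 v v.2).symm
    rw [if_pos hadj, hα, one_mul] at hv
    show ∑ w, A v w * β w = lam * β v - 1
    have : ∑ w, A v w * β w
        = ∑ w : {v : V | v ≠ u0}, (if G.Adj (v : V) (w : V) then 1 else 0) * α (w : V) := by
      refine Finset.sum_congr rfl fun w _ => by rw [hadjA]
    rw [this]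
    linarith [hv]
  have h2 : one ⬝ᵥ β = lam := by
    have hv := key u0
    rw [hsplit] at hv
    rw [if_neg (G.irrefl), hα, mul_one] at hv
    have e : ∑ w : {v : V | v ≠ u0}, (if G.Adj u0 (w : V) then 1 else 0) * α (w : V)
        = ∑ w : {v : V | v ≠ u0}, α (w : V) := by
      refine Finset.sum_congr rfl fun w _ => by rw [if_pos (hu0 w w.2), one_mul]
    rw [e] at hv
    show ∑ w, one w * β w = lam
    simp only [honedef, hβdef, one_mul]
    simpa using hv
  have hAT : Aᵀ = A := by
    ext i j
    rw [Matrix.transpose_apply, hadjA, hadjA]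
    exact if_congr (G.adj_comm _ _) rfl rfl
  have hHerm : A.IsHermitian := by
    rw [Matrix.IsHermitian, Matrix.conjTranspose]
    rw [hAT]; ext i j; simp
  set b := hHerm.eigenvectorBasis with hbdef
  set μ := hHerm.eigenvalues with hμdef
  set w : {v : V | v ≠ u0} → ({v : V | v ≠ u0} → ℝ) := fun i => b i with hwdef
  have hmv : ∀ i, A *ᵥ w i = μ i • w i := fun i => hHerm.mulVec_eigenvectorBasis i
  have hne : ∀ i, w i ≠ (0 : {v : V | v ≠ u0} → ℝ) := fun i h =>
    b.orthonormal.ne_zero i (by simpa [hwdef] using congrArg (WithLp.toLp 2) h)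
  have hlt : ∀ i, |μ i| < |lam| := fun i => hspec (μ i) (w i) (hne i) (hmv i)
  have hSne : Nonempty {v : V | v ≠ u0} := by
    obtain ⟨v, hv⟩ := Fintype.exists_ne_of_one_lt_card (by omega) u0
    exact ⟨⟨v, hv⟩⟩
  have hlam : |lam| > 0 := lt_of_le_of_lt (abs_nonneg _) (hlt hSne.some)
  have hlam0 : lam ≠ 0 := fun h => by simp [h] at hlam
  have hμne : ∀ i, lam - μ i ≠ 0 := by
    intro i h
    have h' : μ i = lam := by linarith
    have h'' := hlt i
    rw [h'] at h''
    exact lt_irrefl _ h''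
  have hdot : ∀ x y : {v : V | v ≠ u0} → ℝ,
      x ⬝ᵥ y = ∑ i, (x ⬝ᵥ w i) * (w i ⬝ᵥ y) := by
    intro x y
    have h := b.sum_inner_mul_inner (𝕜 := ℝ) (WithLp.toLp 2 x) (WithLp.toLp 2 y)
    simp only [PiLp.inner_apply, RCLike.inner_apply, conj_trivial] at h
    simp only [dotProduct]
    simp only [hwdef, mul_comm] at h ⊢
    exact h.symm
  have hpow : ∀ (m : ℕ) i, (A ^ m) *ᵥ w i = (μ i ^ m) • w i := by
    intro m i
    induction m with
    | zero => simp [Matrix.one_mulVec]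
    | succ m ih =>
        rw [pow_succ', ← Matrix.mulVec_mulVec, ih, Matrix.mulVec_smul, hmv,
          smul_smul, ← pow_succ]
  have hsym : ∀ (m : ℕ) (x y : {v : V | v ≠ u0} → ℝ),
      x ⬝ᵥ ((A ^ m) *ᵥ y) = ((A ^ m) *ᵥ x) ⬝ᵥ y := by
    intro m x y
    have hATm : (A ^ m)ᵀ = A ^ m := by rw [Matrix.transpose_pow, hAT]
    rw [Matrix.dotProduct_mulVec, ← Matrix.mulVec_transpose, hATm]
  set c : {v : V | v ≠ u0} → ℝ := fun i => one ⬝ᵥ w i with hcdef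
  set d : {v : V | v ≠ u0} → ℝ := fun i => w i ⬝ᵥ β with hddef
  have hwalk : ∀ m : ℕ, one ⬝ᵥ ((A ^ m) *ᵥ one) = ∑ i, μ i ^ m * (c i) ^ 2 := by
    intro m
    rw [hdot one ((A ^ m) *ᵥ one)]
    refine Finset.sum_congr rfl fun i _ => ?_
    rw [hsym, hpow, smul_dotProduct, dotProduct_comm (w i) one]
    show c i * (μ i ^ m • c i) = μ i ^ m * c i ^ 2
    simp only [smul_eq_mul]
    ring
  have hone : one = lam • β - A *ᵥ β := by rw [h1]; abel
  have hd : ∀ i, c i = (lam - μ i) * d i := by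
    intro i
    show one ⬝ᵥ w i = (lam - μ i) * d i
    rw [dotProduct_comm, hone, dotProduct_sub]
    have e1 : w i ⬝ᵥ (lam • β) = lam * d i := by
      rw [dotProduct_smul]
      simp only [smul_eq_mul]
      rfl
    have e2 : w i ⬝ᵥ (A *ᵥ β) = μ i * d i := by
      have h3 := hsym 1 (w i) β
      rw [pow_one] at h3
      rw [h3, hmv, smul_dotProduct]
      simp only [smul_eq_mul]
      rfl
    rw [e1, e2]; ring
  have hcd : ∑ i, c i * d i = lam := by rw [← hdot one β]; exact h2
  have hcc : ∑ i, (c i) ^ 2 = (n : ℝ) - 1 := by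
    have h := hdot one one
    have e : ∀ i, (one ⬝ᵥ w i) * (w i ⬝ᵥ one) = (c i) ^ 2 := by
      intro i
      rw [dotProduct_comm (w i) one]
      show c i * c i = c i ^ 2
      ring
    rw [Finset.sum_congr rfl fun i _ => e i] at h
    rw [← h]
    have hcardS : Fintype.card {v : V | v ≠ u0} = n - 1 := by
      rw [Fintype.card_subtype]
      rw [show Finset.filter (fun x => x ∈ {v : V | v ≠ u0}) Finset.univ
            = Finset.univ.erase u0 by
          ext x; simp [Set.mem_setOf_eq, and_comm]]
      rw [Finset.card_erase_of_mem (Finset.mem_univ u0), Finset.card_univ, hcard]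
    show ∑ _w : {v : V | v ≠ u0}, (1 : ℝ) * 1 = (n : ℝ) - 1
    simp only [mul_one, Finset.sum_const, Finset.card_univ, nsmul_eq_mul, mul_one]
    rw [hcardS]
    have h1n : (1 : ℕ) ≤ n := by omega
    push_cast [Nat.cast_sub h1n]
    ring
  have hgeo : ∀ i, HasSum (fun k : ℕ => (μ i / lam) ^ (k + 1) * (c i) ^ 2)
      (μ i / (lam - μ i) * (c i) ^ 2) := by
    intro i
    have hr : ‖μ i / lam‖ < 1 := by
      rw [Real.norm_eq_abs, abs_div]
      exact (div_lt_one hlam).mpr (hlt i)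
    have hgs := (hasSum_geometric_of_norm_lt_one hr).mul_left (μ i / lam * (c i) ^ 2)
    have hfun : (fun k : ℕ => μ i / lam * (c i) ^ 2 * (μ i / lam) ^ k)
        = fun k : ℕ => (μ i / lam) ^ (k + 1) * (c i) ^ 2 := by
      funext k; rw [pow_succ]; ring
    have hval : μ i / lam * (c i) ^ 2 * (1 - μ i / lam)⁻¹
        = μ i / (lam - μ i) * (c i) ^ 2 := by
      have hne' : lam - μ i ≠ 0 := hμne i
      rw [show (1 : ℝ) - μ i / lam = (lam - μ i) / lam by field_simp]
      field_simp
      all_goals ring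
    rw [hfun, hval] at hgs
    exact hgs
  have total : HasSum (fun k : ℕ => ∑ i, (μ i / lam) ^ (k + 1) * (c i) ^ 2)
      (∑ i, μ i / (lam - μ i) * (c i) ^ 2) :=
    hasSum_sum fun i _ => hgeo i
  have hfun2 : (fun k : ℕ => (lam ^ (k + 1))⁻¹ * (one ⬝ᵥ ((A ^ (k + 1)) *ᵥ one)))
      = fun k : ℕ => ∑ i, (μ i / lam) ^ (k + 1) * (c i) ^ 2 := by
    funext k
    rw [hwalk, Finset.mul_sum]
    refine Finset.sum_congr rfl fun i _ => ?_
    rw [div_pow]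
    field_simp
  have hval2 : (∑ i, μ i / (lam - μ i) * (c i) ^ 2) = lam ^ 2 - ((n : ℝ) - 1) := by
    have e : ∀ i, μ i / (lam - μ i) * (c i) ^ 2 = lam * (c i * d i) - (c i) ^ 2 := by
      intro i
      have hne' : lam - μ i ≠ 0 := hμne i
      rw [hd i]
      field_simp
      all_goals ring
    rw [Finset.sum_congr rfl fun i _ => e i, Finset.sum_sub_distrib, ← Finset.mul_sum,
      hcd, hcc]
    ring
  rw [hfun2, ← hval2]
  exact total
end

section
/- Let t ≥ 2 be an integer and let K be a connected (t−1)-regular graph such that the join K_1 ∨ K is K_{2,t}-minor-free. Then K is isomorphic to the complete graph K_t. -/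
open Finset SimpleGraph Matrix

attribute [local instance] Classical.propDecidable

section Aux

lemma closed_eq_univ {W : Type*} {K : SimpleGraph W} (hconn : K.Connected)
    (S : Set W) {u₀ : W} (hu : u₀ ∈ S)
    (hcl : ∀ a ∈ S, ∀ b, K.Adj a b → b ∈ S) : ∀ v, v ∈ S := by
  have key : ∀ {a b : W}, K.Walk a b → a ∈ S → b ∈ S := by
    intro a b w
    induction w with
    | nil => exact id
    | @cons x y z h p ih => exact fun hx => ih (hcl x hx y h)
  intro v
  obtain ⟨w⟩ := hconn.preconnected u₀ v
  exact key w hu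

lemma build_minor {V : Type*} (G : SimpleGraph V) (t : ℕ)
    (A : Fin 2 → Set V) (B : Fin t → Set V)
    (hAne : ∀ i, (A i).Nonempty) (hBne : ∀ j, (B j).Nonempty)
    (hAconn : ∀ i, (G.induce (A i)).Connected) (hBconn : ∀ j, (G.induce (B j)).Connected)
    (hAA : Disjoint (A 0) (A 1))
    (hAB : ∀ i j, Disjoint (A i) (B j))
    (hBB : Pairwise fun j k => Disjoint (B j) (B k))
    (hadj : ∀ i j, ∃ v₁ ∈ A i, ∃ v₂ ∈ B j, G.Adj v₁ v₂) :
    (completeBipartiteGraph (Fin 2) (Fin t)).IsMinorOf G := by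
  refine ⟨Sum.elim A B, ?_, ?_, ?_, ?_⟩
  · rintro (i | j); exacts [hAne i, hBne j]
  · rintro (i | j); exacts [hAconn i, hBconn j]
  · rintro (i | j) (i' | j') hne <;> simp only [Sum.elim_inl, Sum.elim_inr]
    · have : i ≠ i' := fun h => hne (by rw [h])
      fin_cases i <;> fin_cases i' <;> first | exact absurd rfl this | exact hAA | exact hAA.symm
    · exact hAB i j'
    · exact (hAB i' j).symm
    · exact hBB (fun h => hne (by rw [h]))
  · rintro (i | j) (i' | j') hadj' <;> simp only [completeBipartiteGraph_adj] at hadj' <;>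
      simp only [Sum.isLeft_inl, Sum.isRight_inl, Sum.isLeft_inr, Sum.isRight_inr] at hadj'
    · simp at hadj'
    · obtain ⟨v₁, h₁, v₂, h₂, h⟩ := hadj i j'
      exact ⟨v₁, h₁, v₂, h₂, h⟩
    · obtain ⟨v₁, h₁, v₂, h₂, h⟩ := hadj i' j
      exact ⟨v₂, h₂, v₁, h₁, h.symm⟩
    · simp at hadj'
variable {α β W : Type*}

lemma gJoin_adj_lr (G : SimpleGraph α) (H : SimpleGraph β) (a : α) (b : β) :
    (gJoin G H).Adj (Sum.inl a) (Sum.inr b) := trivial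

lemma gJoin_adj_rr (G : SimpleGraph α) (H : SimpleGraph β) {b b' : β} (h : H.Adj b b') :
    (gJoin G H).Adj (Sum.inr b) (Sum.inr b') := h

lemma induce_singleton_connected (G : SimpleGraph α) (x : α) :
    (G.induce {x}).Connected := by
  rw [connected_iff]
  refine ⟨fun a b => ?_, ⟨⟨x, rfl⟩⟩⟩
  have : a = b := Subtype.ext (by rw [a.2, b.2])
  rw [this]

lemma induce_pair_connected (G : SimpleGraph α) {x y : α} (h : G.Adj x y) :
    (G.induce ({x, y} : Set α)).Connected := by
  rw [connected_iff]
  refine ⟨fun a b => ?_, ⟨⟨x, Or.inl rfl⟩⟩⟩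
  have key : ∀ c : ({x, y} : Set α), (G.induce {x, y}).Reachable c ⟨x, Or.inl rfl⟩ := by
    rintro ⟨c, hc | hc⟩
    · subst hc; rfl
    · subst hc
      exact Adj.reachable (by simpa using h.symm)
  exact (key a).trans (key b).symm

lemma induce_apex_connected (K : SimpleGraph W) (S : Set (Fin 1 ⊕ W))
    (hS : Sum.inl 0 ∈ S) :
    (((gJoin (⊤ : SimpleGraph (Fin 1)) K)).induce S).Connected := by
  rw [connected_iff]
  refine ⟨fun a b => ?_, ⟨⟨Sum.inl 0, hS⟩⟩⟩
  have key : ∀ c : S, ((gJoin (⊤ : SimpleGraph (Fin 1)) K).induce S).Reachable c ⟨Sum.inl 0, hS⟩ := by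
    rintro ⟨(i | w), hc⟩
    · have : i = 0 := Subsingleton.elim _ _
      subst this; rfl
    · exact Adj.reachable (by exact (trivial : (gJoin (⊤ : SimpleGraph (Fin 1)) K).Adj (Sum.inr w) (Sum.inl 0)))
  exact (key a).trans (key b).symm

lemma induce_image_inr_connected (K : SimpleGraph W) {R : Set W}
    (h : (K.induce R).Connected) :
    ((gJoin (⊤ : SimpleGraph (Fin 1)) K).induce (Sum.inr '' R)).Connected := by
  exact h.map ⟨fun a => ⟨Sum.inr a.1, ⟨a.1, a.2, rfl⟩⟩, fun hab => hab⟩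
    (by rintro ⟨v, x, hx, rfl⟩; exact ⟨⟨x, hx⟩, rfl⟩)

lemma even_sum_inter {W : Type*} [Fintype W] (K : SimpleGraph W) (D : Finset W) :
    Even (∑ x ∈ D, #(K.neighborFinset x ∩ D)) := by
  classical
  let K' : SimpleGraph W :=
    { Adj := fun a b => a ∈ D ∧ b ∈ D ∧ K.Adj a b,
      symm := ⟨fun a b h => ⟨h.2.1, h.1, h.2.2.symm⟩⟩,
      loopless := ⟨fun a h => K.irrefl h.2.2⟩ }
  have hdeg : ∀ x ∈ D, K'.degree x = #(K.neighborFinset x ∩ D) := by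
    intro x hx
    rw [← card_neighborFinset_eq_degree]
    congr 1
    ext b
    simp only [mem_neighborFinset, mem_inter]
    exact ⟨fun h => ⟨h.2.2, h.2.1⟩, fun h => ⟨hx, h.2, h.1⟩⟩
  have hdeg0 : ∀ x ∉ D, K'.degree x = 0 := by
    intro x hx
    rw [← card_neighborFinset_eq_degree, card_eq_zero]
    ext b
    simp only [mem_neighborFinset, notMem_empty, iff_false]
    exact fun h => hx h.1
  have hhs := K'.sum_degrees_eq_twice_card_edges
  have hsplit : ∑ v, K'.degree v = ∑ x ∈ D, #(K.neighborFinset x ∩ D) := by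
    rw [← Finset.sum_subset (Finset.subset_univ D) (fun x _ hx => hdeg0 x hx)]
    exact Finset.sum_congr rfl hdeg
  rw [hsplit] at hhs
  exact ⟨#K'.edgeFinset, by omega⟩

lemma gJoin_adj_rl {α β : Type*} (G : SimpleGraph α) (H : SimpleGraph β) (a : α) (b : β) :
    (gJoin G H).Adj (Sum.inr b) (Sum.inl a) := trivial

variable {W : Type*} [Fintype W]

lemma minor_of_nbhd_subset (K : SimpleGraph W) {t : ℕ} (ht : 1 ≤ t)
    {p q : W} (hpq : p ≠ q) (hsub : K.neighborFinset p ⊆ K.neighborFinset q)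
    (hcard : #(K.neighborFinset p) = t - 1) :
    (completeBipartiteGraph (Fin 2) (Fin t)).IsMinorOf (gJoin (⊤ : SimpleGraph (Fin 1)) K) := by
  classical
  have f := (Finset.equivFinOfCardEq hcard).symm
  have hmem : ∀ (j : Fin t) (h : (j : ℕ) < t - 1), ((f ⟨j, h⟩ : K.neighborFinset p) : W) ∈ K.neighborFinset p :=
    fun j h => (f ⟨j, h⟩).2
  refine build_minor _ t (fun i => if i = 0 then {Sum.inr p} else {Sum.inr q})
    (fun j => if h : (j : ℕ) < t - 1 then {Sum.inr ((f ⟨j, h⟩ : K.neighborFinset p) : W)} else {Sum.inl 0})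
    ?_ ?_ ?_ ?_ ?_ ?_ ?_ ?_
  · intro i; by_cases hi : i = 0
    · rw [if_pos hi]; exact Set.singleton_nonempty _
    · rw [if_neg hi]; exact Set.singleton_nonempty _
  · intro j; by_cases hj : (j : ℕ) < t - 1
    · rw [dif_pos hj]; exact Set.singleton_nonempty _
    · rw [dif_neg hj]; exact Set.singleton_nonempty _
  · intro i; by_cases hi : i = 0
    · rw [if_pos hi]; exact induce_singleton_connected _ _
    · rw [if_neg hi]; exact induce_singleton_connected _ _
  · intro j; by_cases hj : (j : ℕ) < t - 1
    · rw [dif_pos hj]; exact induce_singleton_connected _ _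
    · rw [dif_neg hj]; exact induce_singleton_connected _ _
  · rw [if_pos rfl, if_neg (by norm_num)]
    exact Set.disjoint_singleton.mpr (by simp [hpq])
  · intro i j
    have hne : ∀ (h : (j : ℕ) < t - 1) (r : W), ((f ⟨j, h⟩ : K.neighborFinset p) : W) ∈ K.neighborFinset r →
        (Sum.inr r : Fin 1 ⊕ W) ≠ (Sum.inr ((f ⟨j, h⟩ : K.neighborFinset p) : W)) := by
      intro h r hmem' hEq
      rw [Sum.inr.injEq] at hEq
      rw [← hEq] at hmem'
      exact K.notMem_neighborFinset_self r hmem'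
    by_cases hi : i = 0 <;> [rw [if_pos hi]; rw [if_neg hi]] <;>
      by_cases hj : (j : ℕ) < t - 1
    · rw [dif_pos hj]; exact Set.disjoint_singleton.mpr (hne hj p (hmem j hj))
    · rw [dif_neg hj]; exact Set.disjoint_singleton.mpr (by simp)
    · rw [dif_pos hj]; exact Set.disjoint_singleton.mpr (hne hj q (hsub (hmem j hj)))
    · rw [dif_neg hj]; exact Set.disjoint_singleton.mpr (by simp)
  · intro j k hjk
    by_cases hj : (j : ℕ) < t - 1 <;> [rw [dif_pos hj]; rw [dif_neg hj]] <;>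
      by_cases hk : (k : ℕ) < t - 1
    · rw [dif_pos hk]
      refine Set.disjoint_singleton.mpr ?_
      simp only [ne_eq, Sum.inr.injEq]
      intro hEq
      have : (⟨(j : ℕ), hj⟩ : Fin (t-1)) = ⟨(k : ℕ), hk⟩ := f.injective (Subtype.ext hEq)
      exact hjk (Fin.ext (by simpa using congrArg Fin.val this))
    · rw [dif_neg hk]; exact Set.disjoint_singleton.mpr (by simp)
    · rw [dif_pos hk]; exact Set.disjoint_singleton.mpr (by simp)
    · rw [dif_neg hk]
      exact absurd (Fin.ext (by omega : (j : ℕ) = (k : ℕ))) hjk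
  · intro i j
    have hadjp : ∀ h : (j : ℕ) < t - 1, K.Adj p ((f ⟨j, h⟩ : K.neighborFinset p) : W) := fun h =>
      (K.mem_neighborFinset _ _).mp (hmem j h)
    have hadjq : ∀ h : (j : ℕ) < t - 1, K.Adj q ((f ⟨j, h⟩ : K.neighborFinset p) : W) := fun h =>
      (K.mem_neighborFinset _ _).mp (hsub (hmem j h))
    by_cases hi : i = 0 <;> [rw [if_pos hi]; rw [if_neg hi]] <;>
      by_cases hj : (j : ℕ) < t - 1
    · rw [dif_pos hj]; exact ⟨Sum.inr p, rfl, Sum.inr _, rfl, gJoin_adj_rr _ _ (hadjp hj)⟩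
    · rw [dif_neg hj]; exact ⟨Sum.inr p, rfl, Sum.inl 0, rfl, gJoin_adj_rl _ _ _ _⟩
    · rw [dif_pos hj]; exact ⟨Sum.inr q, rfl, Sum.inr _, rfl, gJoin_adj_rr _ _ (hadjq hj)⟩
    · rw [dif_neg hj]; exact ⟨Sum.inr q, rfl, Sum.inl 0, rfl, gJoin_adj_rl _ _ _ _⟩

lemma minor_of_sparse_edge (K : SimpleGraph W) {t : ℕ}
    {p q : W} (hadj : K.Adj p q)
    (hcard : t ≤ #((K.neighborFinset p ∪ K.neighborFinset q) \ {p, q})) :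
    (completeBipartiteGraph (Fin 2) (Fin t)).IsMinorOf (gJoin (⊤ : SimpleGraph (Fin 1)) K) := by
  classical
  obtain ⟨s', hs'sub, hs'card⟩ := Finset.exists_subset_card_eq hcard
  have f := (Finset.equivFinOfCardEq hs'card).symm
  have hmem : ∀ j : Fin t, ((f j : s') : W) ∈ (K.neighborFinset p ∪ K.neighborFinset q) \ ({p, q} : Finset W) :=
    fun j => hs'sub (f j).2
  have hunion : ∀ j : Fin t, K.Adj p ((f j : s') : W) ∨ K.Adj q ((f j : s') : W) := by
    intro j
    have := (Finset.mem_sdiff.mp (hmem j)).1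
    rcases Finset.mem_union.mp this with h | h
    · exact Or.inl ((K.mem_neighborFinset _ _).mp h)
    · exact Or.inr ((K.mem_neighborFinset _ _).mp h)
  have hnotpq : ∀ j : Fin t, ((f j : s') : W) ≠ p ∧ ((f j : s') : W) ≠ q := by
    intro j
    have := (Finset.mem_sdiff.mp (hmem j)).2
    simp only [Finset.mem_insert, Finset.mem_singleton] at this
    exact ⟨fun h => this (Or.inl h), fun h => this (Or.inr h)⟩
  refine build_minor _ t
    (fun i => if i = 0 then ({Sum.inr p, Sum.inr q} : Set (Fin 1 ⊕ W)) else {Sum.inl 0})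
    (fun j => {Sum.inr ((f j : s') : W)}) ?_ ?_ ?_ ?_ ?_ ?_ ?_ ?_
  · intro i; by_cases hi : i = 0
    · rw [if_pos hi]; exact ⟨Sum.inr p, Or.inl rfl⟩
    · rw [if_neg hi]; exact Set.singleton_nonempty _
  · intro j; exact Set.singleton_nonempty _
  · intro i; by_cases hi : i = 0
    · rw [if_pos hi]; exact induce_pair_connected _ (gJoin_adj_rr _ _ hadj)
    · rw [if_neg hi]; exact induce_singleton_connected _ _
  · intro j; exact induce_singleton_connected _ _
  · rw [if_pos rfl, if_neg (by norm_num)]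
    rw [Set.disjoint_singleton_right]
    rintro (h | h) <;> simp_all
  · intro i j
    by_cases hi : i = 0
    · rw [if_pos hi, Set.disjoint_singleton_right]
      rintro (h | h)
      · exact (hnotpq j).1 (by injection h.symm with h'; exact h'.symm)
      · exact (hnotpq j).2 (by injection (Set.mem_singleton_iff.mp h).symm with h'; exact h'.symm)
    · rw [if_neg hi, Set.disjoint_singleton_right]
      simp
  · intro j k hjk
    refine Set.disjoint_singleton.mpr ?_
    simp only [ne_eq, Sum.inr.injEq]
    intro hEq
    exact hjk (f.injective (Subtype.ext hEq))
  · intro i j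
    by_cases hi : i = 0
    · rw [if_pos hi]
      rcases hunion j with h | h
      · exact ⟨Sum.inr p, Or.inl rfl, Sum.inr _, rfl, gJoin_adj_rr _ _ h⟩
      · exact ⟨Sum.inr q, Or.inr rfl, Sum.inr _, rfl, gJoin_adj_rr _ _ h⟩
    · rw [if_neg hi]
      exact ⟨Sum.inl 0, rfl, Sum.inr _, rfl, gJoin_adj_lr _ _ _ _⟩

lemma reach_to_induce {W : Type*} (K : SimpleGraph W) (R : Set W) {a b : W}
    (h : Relation.ReflTransGen (fun x y => x ∈ R ∧ y ∈ R ∧ K.Adj x y) a b)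
    (ha : a ∈ R) : ∀ hb : b ∈ R, (K.induce R).Reachable ⟨a, ha⟩ ⟨b, hb⟩ := by
  induction h with
  | refl => intro _; rfl
  | tail _ hlast ih =>
    intro hd
    exact (ih hlast.1).trans (SimpleGraph.Adj.reachable (by exact hlast.2.2))

lemma minor_cycle (K : SimpleGraph W) (hconn : K.Connected)
    {u v₁ v₂ w z : W}
    (hNu : K.neighborFinset u = {v₁, v₂})
    (hNv₁ : K.neighborFinset v₁ = {u, w})
    (hNw : K.neighborFinset w = {v₁, z})
    (hdeg2 : ∀ x : W, #(K.neighborFinset x) = 2)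
    (hzu : z ≠ u) (hv₂z : v₂ ≠ z) :
    (completeBipartiteGraph (Fin 2) (Fin 3)).IsMinorOf (gJoin (⊤ : SimpleGraph (Fin 1)) K) := by
  classical
  -- adjacency characterizations
  have hAdjU : ∀ b, K.Adj u b ↔ (b = v₁ ∨ b = v₂) := by
    intro b
    rw [← K.mem_neighborFinset, hNu]; simp
  have hAdjV₁ : ∀ b, K.Adj v₁ b ↔ (b = u ∨ b = w) := by
    intro b
    rw [← K.mem_neighborFinset, hNv₁]; simp
  have hAdjW : ∀ b, K.Adj w b ↔ (b = v₁ ∨ b = z) := by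
    intro b
    rw [← K.mem_neighborFinset, hNw]; simp
  have hadj_uv₁ : K.Adj u v₁ := (hAdjU v₁).mpr (Or.inl rfl)
  have hadj_uv₂ : K.Adj u v₂ := (hAdjU v₂).mpr (Or.inr rfl)
  have hadj_v₁w : K.Adj v₁ w := (hAdjV₁ w).mpr (Or.inr rfl)
  have hadj_wz : K.Adj w z := (hAdjW z).mpr (Or.inr rfl)
  have huw : u ≠ w := by
    intro h
    have := hdeg2 v₁
    rw [hNv₁, ← h] at this
    simp at this
  have hv₁v₂ : v₁ ≠ v₂ := by
    intro h
    have := hdeg2 u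
    rw [hNu, ← h] at this
    simp at this
  have hv₁z : v₁ ≠ z := by
    intro h
    have := hdeg2 w
    rw [hNw, ← h] at this
    simp at this
  have huv₁ : u ≠ v₁ := hadj_uv₁.ne
  have huv₂ : u ≠ v₂ := hadj_uv₂.ne
  have hv₁w : v₁ ≠ w := hadj_v₁w.ne
  have hwz : w ≠ z := hadj_wz.ne
  have hwv₂ : w ≠ v₂ := by
    intro h
    have : K.Adj w u := by rw [← h] at hadj_uv₂; exact hadj_uv₂.symm
    rcases (hAdjW u).mp this with h' | h'
    · exact huv₁ h'
    · exact hzu h'.symm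
  -- the remainder set
  set R : Set W := {x | x ≠ u ∧ x ≠ v₁ ∧ x ≠ w} with hR
  have hv₂R : v₂ ∈ R := ⟨fun h => huv₂ h.symm, fun h => hv₁v₂ h.symm, fun h => hwv₂ h.symm⟩
  have hzR : z ∈ R := ⟨hzu, fun h => hv₁z h.symm, fun h => hwz h.symm⟩
  set rel : W → W → Prop := fun x y => x ∈ R ∧ y ∈ R ∧ K.Adj x y with hrel
  have hsymrel : Symmetric rel := fun a b h => ⟨h.2.1, h.1, h.2.2.symm⟩
  -- coverage
  have hcov : ∀ x ∈ R, Relation.ReflTransGen rel x v₂ ∨ Relation.ReflTransGen rel x z := by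
    intro x hx
    set T : Set W :=
      {a | a = u ∨ a = v₁ ∨ a = w ∨
        (a ∈ R ∧ (Relation.ReflTransGen rel a v₂ ∨ Relation.ReflTransGen rel a z))} with hT
    have hcl : ∀ a ∈ T, ∀ b, K.Adj a b → b ∈ T := by
      rintro a (rfl | rfl | rfl | ⟨haR, hr⟩) b hab
      · rcases (hAdjU b).mp hab with rfl | rfl
        · exact Or.inr (Or.inl rfl)
        · exact Or.inr (Or.inr (Or.inr ⟨hv₂R, Or.inl Relation.ReflTransGen.refl⟩))
      · rcases (hAdjV₁ b).mp hab with rfl | rfl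
        · exact Or.inl rfl
        · exact Or.inr (Or.inr (Or.inl rfl))
      · rcases (hAdjW b).mp hab with rfl | rfl
        · exact Or.inr (Or.inl rfl)
        · exact Or.inr (Or.inr (Or.inr ⟨hzR, Or.inr Relation.ReflTransGen.refl⟩))
      · by_cases hb : b ∈ R
        · refine Or.inr (Or.inr (Or.inr ⟨hb, ?_⟩))
          rcases hr with h | h
          · exact Or.inl (Relation.ReflTransGen.head ⟨hb, haR, hab.symm⟩ h)
          · exact Or.inr (Relation.ReflTransGen.head ⟨hb, haR, hab.symm⟩ h)
        · rw [hR] at hb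
          simp only [Set.mem_setOf_eq, not_and_or, not_not] at hb
          rcases hb with rfl | rfl | rfl
          · exact Or.inl rfl
          · exact Or.inr (Or.inl rfl)
          · exact Or.inr (Or.inr (Or.inl rfl))
    have := closed_eq_univ hconn T (Or.inl rfl) hcl x
    rcases this with rfl | rfl | rfl | ⟨_, hr⟩
    · exact absurd rfl hx.1
    · exact absurd rfl hx.2.1
    · exact absurd rfl hx.2.2
    · exact hr
  -- link
  have hlink : Relation.ReflTransGen rel v₂ z := by
    by_contra hno
    set D : Finset W := Finset.univ.filter (fun x => x ∈ R ∧ Relation.ReflTransGen rel x v₂) with hD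
    have hmemD : ∀ x, x ∈ D ↔ (x ∈ R ∧ Relation.ReflTransGen rel x v₂) := by
      intro x; rw [hD]; simp
    have hv₂D : v₂ ∈ D := (hmemD v₂).mpr ⟨hv₂R, Relation.ReflTransGen.refl⟩
    have hzD : z ∉ D := by
      intro h
      exact hno (by haveI : Std.Symm rel := ⟨fun a b h => hsymrel h⟩; exact Std.Symm.symm (r := Relation.ReflTransGen rel) _ _ ((hmemD z).mp h).2)
    have huD : u ∉ D := fun h => (((hmemD u).mp h).1).1 rfl
    have key : ∀ x ∈ D, ∀ b, K.Adj x b → b = u ∨ b ∈ D := by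
      intro x hx b hab
      obtain ⟨hxR, hxr⟩ := (hmemD x).mp hx
      by_cases hbu : b = u
      · exact Or.inl hbu
      by_cases hbv₁ : b = v₁
      · subst hbv₁
        rcases (hAdjV₁ x).mp hab.symm with rfl | rfl
        · exact absurd rfl hxR.1
        · exact absurd rfl hxR.2.2
      by_cases hbw : b = w
      · subst hbw
        rcases (hAdjW x).mp hab.symm with rfl | rfl
        · exact absurd rfl hxR.2.1
        · exact absurd hx hzD
      have hbR : b ∈ R := ⟨hbu, hbv₁, hbw⟩
      exact Or.inr ((hmemD b).mpr ⟨hbR, Relation.ReflTransGen.head ⟨hbR, hxR, hab.symm⟩ hxr⟩)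
    have key3 : ∀ x ∈ D, #(K.neighborFinset x \ D) = if x = v₂ then 1 else 0 := by
      intro x hx
      have hsub : K.neighborFinset x \ D ⊆ {u} := by
        intro b hb
        rw [Finset.mem_sdiff, K.mem_neighborFinset] at hb
        rcases key x hx b hb.1 with hbu | hmem
        · rw [hbu]; exact Finset.mem_singleton_self u
        · exact absurd hmem hb.2
      by_cases hxv : x = v₂
      · rw [if_pos hxv]
        have : K.neighborFinset x \ D = {u} := by
          apply Finset.Subset.antisymm hsub
          intro b hb
          rw [Finset.mem_singleton] at hb
          subst hb
          rw [Finset.mem_sdiff, K.mem_neighborFinset]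
          exact ⟨by rw [hxv]; exact hadj_uv₂.symm, huD⟩
        rw [this]; rfl
      · rw [if_neg hxv]
        rw [Finset.card_eq_zero]
        rw [← Finset.subset_empty]
        intro b hb
        have hbu : b = u := Finset.mem_singleton.mp (hsub hb)
        subst hbu
        rw [Finset.mem_sdiff, K.mem_neighborFinset] at hb
        rcases (hAdjU x).mp hb.1.symm with h' | h'
        · exact absurd h' ((((hmemD x).mp hx).1).2.1)
        · exact absurd h' hxv
    have hsum2 : ∑ x ∈ D, (#(K.neighborFinset x ∩ D) + #(K.neighborFinset x \ D)) = 2 * #D := by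
      rw [Finset.sum_congr rfl (fun x _ => by rw [Finset.card_inter_add_card_sdiff, hdeg2 x])]
      rw [Finset.sum_const, smul_eq_mul, mul_comm]
    have hsum3 : ∑ x ∈ D, #(K.neighborFinset x \ D) = 1 := by
      rw [Finset.sum_congr rfl key3, Finset.sum_ite_eq' D v₂ (fun _ => 1), if_pos hv₂D]
    have heven := even_sum_inter K D
    rw [Finset.sum_add_distrib, hsum3] at hsum2
    obtain ⟨c, hc⟩ := heven
    omega
  -- R is connected
  have hRconn : (K.induce R).Connected := by
    rw [connected_iff]
    refine ⟨?_, ⟨⟨v₂, hv₂R⟩⟩⟩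
    have key : ∀ c : R, (K.induce R).Reachable c ⟨v₂, hv₂R⟩ := by
      rintro ⟨c, hc⟩
      rcases hcov c hc with h | h
      · exact reach_to_induce K R h hc hv₂R
      · exact reach_to_induce K R
          (h.trans (by haveI : Std.Symm rel := ⟨fun a b h => hsymrel h⟩; exact Std.Symm.symm (r := Relation.ReflTransGen rel) _ _ hlink)) hc hv₂R
    intro a b
    exact (key a).trans (key b).symm
  -- build the minor
  have hinrR : ∀ y : W, y ∉ R → Disjoint ({Sum.inr y} : Set (Fin 1 ⊕ W)) (Sum.inr '' R) := by
    intro y hy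
    rw [Set.disjoint_singleton_left]
    rintro ⟨x, hx, hEq⟩
    rw [Sum.inr.injEq] at hEq
    exact hy (hEq ▸ hx)
  have hapexR : Disjoint ({Sum.inl 0} : Set (Fin 1 ⊕ W)) (Sum.inr '' R) := by
    rw [Set.disjoint_singleton_left]
    rintro ⟨x, hx, hEq⟩
    cases hEq
  refine build_minor _ 3
    (fun i => if i = 0 then {Sum.inr u} else {Sum.inr w})
    (fun j => if j = 0 then {Sum.inr v₁} else if j = 1 then ({Sum.inl 0} : Set (Fin 1 ⊕ W)) else Sum.inr '' R)
    ?_ ?_ ?_ ?_ ?_ ?_ ?_ ?_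
  · intro i; by_cases hi : i = 0
    · rw [if_pos hi]; exact Set.singleton_nonempty _
    · rw [if_neg hi]; exact Set.singleton_nonempty _
  · intro j; by_cases hj0 : j = 0
    · rw [if_pos hj0]; exact Set.singleton_nonempty _
    · rw [if_neg hj0]; by_cases hj1 : j = 1
      · rw [if_pos hj1]; exact Set.singleton_nonempty _
      · rw [if_neg hj1]; exact ⟨Sum.inr v₂, v₂, hv₂R, rfl⟩
  · intro i; by_cases hi : i = 0
    · rw [if_pos hi]; exact induce_singleton_connected _ _
    · rw [if_neg hi]; exact induce_singleton_connected _ _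
  · intro j; by_cases hj0 : j = 0
    · rw [if_pos hj0]; exact induce_singleton_connected _ _
    · rw [if_neg hj0]; by_cases hj1 : j = 1
      · rw [if_pos hj1]; exact induce_singleton_connected _ _
      · rw [if_neg hj1]; exact induce_image_inr_connected K hRconn
  · rw [if_pos rfl, if_neg (by norm_num)]
    exact Set.disjoint_singleton.mpr (by simp [huw])
  · intro i j
    by_cases hi : i = 0 <;> [rw [if_pos hi]; rw [if_neg hi]] <;> by_cases hj0 : j = 0
    · rw [if_pos hj0]; exact Set.disjoint_singleton.mpr (by simp [huv₁])
    · rw [if_neg hj0]; by_cases hj1 : j = 1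
      · rw [if_pos hj1]; exact Set.disjoint_singleton.mpr (by simp)
      · rw [if_neg hj1]; exact hinrR u (fun h => h.1 rfl)
    · rw [if_pos hj0]
      exact Set.disjoint_singleton.mpr (by simp only [ne_eq, Sum.inr.injEq]; exact fun h => hv₁w h.symm)
    · rw [if_neg hj0]; by_cases hj1 : j = 1
      · rw [if_pos hj1]; exact Set.disjoint_singleton.mpr (by simp)
      · rw [if_neg hj1]; exact hinrR w (fun h => h.2.2 rfl)
  · intro j k hjk
    by_cases hj0 : j = 0 <;> [rw [if_pos hj0]; skip] <;> [skip; rw [if_neg hj0]]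
    · by_cases hk0 : k = 0
      · exact absurd (hj0.trans hk0.symm) hjk
      · rw [if_neg hk0]; by_cases hk1 : k = 1
        · rw [if_pos hk1]; exact Set.disjoint_singleton.mpr (by simp)
        · rw [if_neg hk1]; exact hinrR v₁ (fun h => h.2.1 rfl)
    · by_cases hj1 : j = 1 <;> [rw [if_pos hj1]; rw [if_neg hj1]]
      · by_cases hk0 : k = 0
        · rw [if_pos hk0]; exact Set.disjoint_singleton.mpr (by simp)
        · rw [if_neg hk0]; by_cases hk1 : k = 1
          · exact absurd (hj1.trans hk1.symm) hjk
          · rw [if_neg hk1]; exact hapexR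
      · by_cases hk0 : k = 0
        · rw [if_pos hk0]; exact (hinrR v₁ (fun h => h.2.1 rfl)).symm
        · rw [if_neg hk0]; by_cases hk1 : k = 1
          · rw [if_pos hk1]; exact hapexR.symm
          · exact absurd (by omega : j = k) hjk
  · intro i j
    by_cases hi : i = 0 <;> [rw [if_pos hi]; rw [if_neg hi]] <;> by_cases hj0 : j = 0
    · rw [if_pos hj0]; exact ⟨Sum.inr u, rfl, Sum.inr v₁, rfl, gJoin_adj_rr _ _ hadj_uv₁⟩
    · rw [if_neg hj0]; by_cases hj1 : j = 1
      · rw [if_pos hj1]; exact ⟨Sum.inr u, rfl, Sum.inl 0, rfl, gJoin_adj_rl _ _ _ _⟩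
      · rw [if_neg hj1]
        exact ⟨Sum.inr u, rfl, Sum.inr v₂, ⟨v₂, hv₂R, rfl⟩, gJoin_adj_rr _ _ hadj_uv₂⟩
    · rw [if_pos hj0]; exact ⟨Sum.inr w, rfl, Sum.inr v₁, rfl, gJoin_adj_rr _ _ hadj_v₁w.symm⟩
    · rw [if_neg hj0]; by_cases hj1 : j = 1
      · rw [if_pos hj1]; exact ⟨Sum.inr w, rfl, Sum.inl 0, rfl, gJoin_adj_rl _ _ _ _⟩
      · rw [if_neg hj1]
        exact ⟨Sum.inr w, rfl, Sum.inr z, ⟨z, hzR, rfl⟩, gJoin_adj_rr _ _ hadj_wz⟩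

theorem regular_component_is_clique' (t : ℕ) (ht : 2 ≤ t) (W : Type) [Fintype W]
    (K : SimpleGraph W) (hconn : K.Connected) (hreg : ∀ v : W, K.degree v = t - 1)
    (hfree : ¬ (completeBipartiteGraph (Fin 2) (Fin t)).IsMinorOf (gJoin (⊤ : SimpleGraph (Fin 1)) K)) :
    Nonempty (K ≃g (⊤ : SimpleGraph (Fin t))) := by
  classical
  have hregF : ∀ v : W, #(K.neighborFinset v) = t - 1 :=
    fun v => (K.card_neighborFinset_eq_degree v).trans (hreg v)
  by_cases hcomp : ∀ x y : W, x ≠ y → K.Adj x y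
  · obtain ⟨v⟩ := hconn.nonempty
    have hNv : K.neighborFinset v = Finset.univ.erase v := by
      ext b
      rw [K.mem_neighborFinset, Finset.mem_erase]
      constructor
      · exact fun h => ⟨h.ne', Finset.mem_univ b⟩
      · exact fun h => hcomp v b (fun hvb => h.1 hvb.symm)
    have hcard : Fintype.card W = t := by
      have h1 := hregF v
      rw [hNv, Finset.card_erase_of_mem (Finset.mem_univ v), Finset.card_univ] at h1
      have h2 : 1 ≤ Fintype.card W := @Fintype.card_pos _ _ ⟨v⟩
      omega
    refine ⟨⟨Fintype.equivFinOfCardEq hcard, ?_⟩⟩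
    intro a b
    rw [top_adj]
    constructor
    · intro h
      exact hcomp a b (fun hab => h (congrArg _ hab))
    · intro h hEq
      exact h.ne ((Fintype.equivFinOfCardEq hcard).injective hEq)
  · exfalso
    apply hfree
    push_neg at hcomp
    obtain ⟨x, y, hxy, hnadj⟩ := hcomp
    -- find a, b with Adj x a, Adj a b, ¬ Adj x b, b ≠ x
    have hnotcl : ¬(∀ c ∈ {e | e = x ∨ K.Adj x e}, ∀ d, K.Adj c d → d ∈ {e | e = x ∨ K.Adj x e}) := by
      intro hcl
      rcases closed_eq_univ hconn _ (Or.inl rfl : x ∈ {e | e = x ∨ K.Adj x e}) hcl y with h | h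
      · exact hxy h.symm
      · exact hnadj h
    push_neg at hnotcl
    obtain ⟨a, ha, b, hab, hbn⟩ := hnotcl
    have hbn' : b ≠ x ∧ ¬K.Adj x b := by
      have : ¬(b = x ∨ K.Adj x b) := hbn
      push_neg at this
      exact this
    have hxa : K.Adj x a := by
      rcases ha with h | h
      · rw [h] at hab; exact absurd hab hbn'.2
      · exact h
    have hxb : x ≠ b := fun h => hbn'.1 h.symm
    -- t ≥ 3
    have ht3 : 3 ≤ t := by
      have hsubN : ({x, b} : Finset W) ⊆ K.neighborFinset a := by
        intro c hc
        rcases Finset.mem_insert.mp hc with rfl | hc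
        · exact (K.mem_neighborFinset a c).mpr hxa.symm
        · rw [Finset.mem_singleton] at hc
          rw [hc, K.mem_neighborFinset]
          exact hab
      have h2 : 2 ≤ #(K.neighborFinset a) := by
        calc 2 = #({x, b} : Finset W) := (Finset.card_pair hxb).symm
        _ ≤ _ := Finset.card_le_card hsubN
      rw [hregF a] at h2
      omega
    by_cases hsub : ∃ p q : W, p ≠ q ∧ K.neighborFinset p ⊆ K.neighborFinset q
    · obtain ⟨p, q, hpq, hss⟩ := hsub
      exact minor_of_nbhd_subset K (by omega) hpq hss (hregF p)
    push_neg at hsub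
    by_cases hsparse : ∃ p q : W, K.Adj p q ∧
        t ≤ #((K.neighborFinset p ∪ K.neighborFinset q) \ {p, q})
    · obtain ⟨p, q, h1, h2⟩ := hsparse
      exact minor_of_sparse_edge K h1 h2
    push_neg at hsparse
    have hcommon : ∀ p q : W, K.Adj p q →
        t - 3 ≤ #(K.neighborFinset p ∩ K.neighborFinset q) := by
      intro p q h
      have h1 := hsparse p q h
      have hpq_mem : ({p, q} : Finset W) ⊆ K.neighborFinset p ∪ K.neighborFinset q := by
        intro c hc
        rcases Finset.mem_insert.mp hc with rfl | hc
        · exact Finset.mem_union_right _ ((K.mem_neighborFinset q c).mpr h.symm)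
        · rw [Finset.mem_singleton] at hc
          rw [hc]
          exact Finset.mem_union_left _ ((K.mem_neighborFinset p q).mpr h)
      have h2 : #((K.neighborFinset p ∪ K.neighborFinset q) \ ({p, q} : Finset W)) =
          #(K.neighborFinset p ∪ K.neighborFinset q) - 2 := by
        rw [Finset.card_sdiff_of_subset hpq_mem, Finset.card_pair h.ne]
      have h3 := Finset.card_union_add_card_inter (K.neighborFinset p) (K.neighborFinset q)
      rw [hregF p, hregF q] at h3
      have h4 : 2 ≤ #(K.neighborFinset p ∪ K.neighborFinset q) := by
        calc 2 = #({p, q} : Finset W) := (Finset.card_pair h.ne).symm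
        _ ≤ _ := Finset.card_le_card hpq_mem
      omega
    -- dense analysis
    set S' := K.neighborFinset a ∩ K.neighborFinset x with hS'def
    have hc1 : t - 3 ≤ #S' := hcommon a x hxa.symm
    have hxS' : x ∉ S' := fun h => K.notMem_neighborFinset_self x (Finset.mem_inter.mp h).2
    have hbS' : b ∉ S' := fun h => hbn'.2 ((K.mem_neighborFinset x b).mp (Finset.mem_inter.mp h).2)
    have haS' : a ∉ S' := fun h => K.notMem_neighborFinset_self a (Finset.mem_inter.mp h).1
    have hS'Nx : S' ⊆ K.neighborFinset x := Finset.inter_subset_right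
    have hS'Na : S' ⊆ K.neighborFinset a := Finset.inter_subset_left
    have hsub1 : S' ∪ {x, b} ⊆ K.neighborFinset a := by
      intro c hc
      rcases Finset.mem_union.mp hc with hc | hc
      · exact hS'Na hc
      · rcases Finset.mem_insert.mp hc with rfl | hc
        · exact (K.mem_neighborFinset a c).mpr hxa.symm
        · rw [Finset.mem_singleton] at hc
          rw [hc, K.mem_neighborFinset]
          exact hab
    have hdisj1 : Disjoint S' ({x, b} : Finset W) := by
      rw [Finset.disjoint_right]
      intro c hc
      rcases Finset.mem_insert.mp hc with rfl | hc
      · exact hxS'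
      · rw [Finset.mem_singleton] at hc; rw [hc]; exact hbS'
    have hcard1 : #(S' ∪ ({x, b} : Finset W)) = #S' + 2 := by
      rw [Finset.card_union_of_disjoint hdisj1, Finset.card_pair hxb]
    have hle1 : #(S' ∪ ({x, b} : Finset W)) ≤ t - 1 := by
      rw [← hregF a]; exact Finset.card_le_card hsub1
    have hS'card : #S' = t - 3 := by omega
    have hNa : K.neighborFinset a = S' ∪ {x, b} :=
      (Finset.eq_of_subset_of_card_le hsub1 (by rw [hregF a, hcard1, hS'card]; omega)).symm
    -- S' ⊆ N b
    have hc2 : t - 3 ≤ #(K.neighborFinset b ∩ K.neighborFinset a) := hcommon b a hab.symm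
    have hsub2 : K.neighborFinset b ∩ K.neighborFinset a ⊆ K.neighborFinset b ∩ S' := by
      intro c hc
      obtain ⟨hcb, hca⟩ := Finset.mem_inter.mp hc
      rw [hNa] at hca
      rcases Finset.mem_union.mp hca with hca | hca
      · exact Finset.mem_inter.mpr ⟨hcb, hca⟩
      · exfalso
        rcases Finset.mem_insert.mp hca with rfl | hca
        · exact hbn'.2 ((K.mem_neighborFinset b c).mp hcb).symm
        · rw [Finset.mem_singleton] at hca
          rw [hca] at hcb
          exact K.notMem_neighborFinset_self b hcb
    have hS'subNb : S' ⊆ K.neighborFinset b := by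
      have h5 : t - 3 ≤ #(K.neighborFinset b ∩ S') :=
        le_trans hc2 (Finset.card_le_card hsub2)
      have heq : K.neighborFinset b ∩ S' = S' :=
        Finset.eq_of_subset_of_card_le Finset.inter_subset_right (by omega)
      intro c hc
      rw [← heq] at hc
      exact (Finset.mem_inter.mp hc).1
    -- find z
    have hsub3 : S' ∪ {a} ⊆ K.neighborFinset b := by
      intro c hc
      rcases Finset.mem_union.mp hc with hc | hc
      · exact hS'subNb hc
      · rw [Finset.mem_singleton] at hc
        rw [hc, K.mem_neighborFinset]
        exact hab.symm
    have hcard3 : #(S' ∪ ({a} : Finset W)) = t - 2 := by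
      rw [Finset.card_union_of_disjoint (Finset.disjoint_singleton_right.mpr haS'),
        Finset.card_singleton, hS'card]
      omega
    have hone : #(K.neighborFinset b \ (S' ∪ {a})) = 1 := by
      rw [Finset.card_sdiff_of_subset hsub3, hregF b, hcard3]
      omega
    obtain ⟨z, hz⟩ := Finset.card_eq_one.mp hone
    have hzmem : z ∈ K.neighborFinset b \ (S' ∪ {a}) := by
      rw [hz]; exact Finset.mem_singleton_self z
    obtain ⟨hzNb, hznot⟩ := Finset.mem_sdiff.mp hzmem
    have hzS' : z ∉ S' := fun h => hznot (Finset.mem_union_left _ h)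
    have hza : z ≠ a := fun h =>
      hznot (Finset.mem_union_right _ (by rw [h]; exact Finset.mem_singleton_self a))
    have hadj_bz : K.Adj b z := (K.mem_neighborFinset b z).mp hzNb
    have hNbmem : ∀ c ∈ K.neighborFinset b, c ∈ S' ∨ c = a ∨ c = z := by
      intro c hc
      by_cases h1 : c ∈ S' ∪ {a}
      · rcases Finset.mem_union.mp h1 with h1 | h1
        · exact Or.inl h1
        · exact Or.inr (Or.inl (Finset.mem_singleton.mp h1))
      · have : c ∈ K.neighborFinset b \ (S' ∪ {a}) := Finset.mem_sdiff.mpr ⟨hc, h1⟩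
        rw [hz] at this
        exact Or.inr (Or.inr (Finset.mem_singleton.mp this))
    by_cases hzNx : z ∈ K.neighborFinset x
    · -- N x ⊆ N b, contradiction with hsub
      have hzx' : z ≠ x := fun h => K.notMem_neighborFinset_self x (h ▸ hzNx)
      have hsub4 : S' ∪ {a, z} ⊆ K.neighborFinset x := by
        intro c hc
        rcases Finset.mem_union.mp hc with hc | hc
        · exact hS'Nx hc
        · rcases Finset.mem_insert.mp hc with rfl | hc
          · exact (K.mem_neighborFinset x c).mpr hxa
          · rw [Finset.mem_singleton] at hc
            rw [hc]; exact hzNx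
      have hdisj4 : Disjoint S' ({a, z} : Finset W) := by
        rw [Finset.disjoint_right]
        intro c hc
        rcases Finset.mem_insert.mp hc with rfl | hc
        · exact haS'
        · rw [Finset.mem_singleton] at hc; rw [hc]; exact hzS'
      have hcard4 : #(S' ∪ ({a, z} : Finset W)) = t - 1 := by
        rw [Finset.card_union_of_disjoint hdisj4, Finset.card_pair (Ne.symm hza), hS'card]
        omega
      have hNx : K.neighborFinset x = S' ∪ {a, z} :=
        (Finset.eq_of_subset_of_card_le hsub4 (by rw [hregF x, hcard4])).symm
      refine absurd ?_ (hsub x b hxb)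
      rw [hNx]
      intro c hc
      rcases Finset.mem_union.mp hc with hc | hc
      · exact hS'subNb hc
      · rcases Finset.mem_insert.mp hc with rfl | hc
        · exact (K.mem_neighborFinset b c).mpr hab.symm
        · rw [Finset.mem_singleton] at hc
          rw [hc]; exact hzNb
    · -- z ∉ N x
      have hzx : z ≠ x := fun h => hbn'.2 (by rw [← h]; exact hadj_bz.symm)
      by_cases ht4 : t = 3
      · -- cycle case
        subst ht4
        have hS'empty : S' = ∅ := Finset.card_eq_zero.mp (by rw [hS'card])
        have hNa3 : K.neighborFinset a = {x, b} := by rw [hNa, hS'empty, Finset.empty_union]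
        have hNb3 : K.neighborFinset b = {a, z} := by
          refine (Finset.eq_of_subset_of_card_le ?_ ?_).symm
          · intro c hc
            rcases Finset.mem_insert.mp hc with rfl | hc
            · exact (K.mem_neighborFinset b c).mpr hab.symm
            · rw [Finset.mem_singleton] at hc
              rw [hc]; exact hzNb
          · rw [hregF b, Finset.card_pair hza.symm]
        have hNx2 : #(K.neighborFinset x) = 2 := by rw [hregF x]
        obtain ⟨c, d, hcd, hNxcd⟩ := Finset.card_eq_two.mp hNx2
        have haNx : a ∈ K.neighborFinset x := (K.mem_neighborFinset x a).mpr hxa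
        have hdeg2 : ∀ v : W, #(K.neighborFinset v) = 2 := fun v => hregF v
        have hacd : a = c ∨ a = d := by
          rw [hNxcd] at haNx
          rcases Finset.mem_insert.mp haNx with h | h
          · exact Or.inl h
          · exact Or.inr (Finset.mem_singleton.mp h)
        rcases hacd with rfl | rfl
        · -- v₂ = d
          have hNxpair : K.neighborFinset x = {a, d} := hNxcd
          have hdz : d ≠ z := by
            intro h
            apply hzNx
            rw [hNxpair, ← h]
            exact Finset.mem_insert_of_mem (Finset.mem_singleton_self d)
          exact minor_cycle K hconn hNxpair hNa3 hNb3 hdeg2 hzx hdz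
        · -- v₂ = c
          have hNxpair : K.neighborFinset x = {a, c} := by rw [hNxcd, Finset.pair_comm]
          have hcz : c ≠ z := by
            intro h
            apply hzNx
            rw [hNxpair, ← h]
            exact Finset.mem_insert_of_mem (Finset.mem_singleton_self c)
          exact minor_cycle K hconn hNxpair hNa3 hNb3 hdeg2 hzx hcz
      · -- t ≥ 4 : contradiction
        exfalso
        have hc3 : t - 3 ≤ #(K.neighborFinset b ∩ K.neighborFinset z) := hcommon b z hadj_bz
        have hnonempty : (K.neighborFinset b ∩ K.neighborFinset z).Nonempty :=
          Finset.card_pos.mp (by omega)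
        obtain ⟨s, hs⟩ := hnonempty
        obtain ⟨hsNb, hsNz⟩ := Finset.mem_inter.mp hs
        have hadj_zs : K.Adj z s := (K.mem_neighborFinset z s).mp hsNz
        have hsa : s ≠ a := by
          intro h
          have hzNa : z ∈ K.neighborFinset a := by
            rw [K.mem_neighborFinset]
            exact (h ▸ hadj_zs).symm
          rw [hNa] at hzNa
          rcases Finset.mem_union.mp hzNa with h1 | h1
          · exact hzS' h1
          · rcases Finset.mem_insert.mp h1 with h1 | h1
            · exact hzx h1
            · rw [Finset.mem_singleton] at h1
              exact hadj_bz.ne' h1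
        have hsS' : s ∈ S' := by
          rcases hNbmem s hsNb with h | h | h
          · exact h
          · exact absurd h hsa
          · exact absurd h hadj_zs.ne'
        have hadj_xs : K.Adj x s := (K.mem_neighborFinset x s).mp (hS'Nx hsS')
        have hc4 : t - 3 ≤ #(K.neighborFinset s ∩ K.neighborFinset x) := hcommon s x hadj_xs.symm
        have hfinal_sub : (K.neighborFinset s ∩ K.neighborFinset x) ∪ {x, b, z} ⊆
            K.neighborFinset s := by
          intro c hc
          rcases Finset.mem_union.mp hc with hc | hc
          · exact (Finset.mem_inter.mp hc).1
          · rcases Finset.mem_insert.mp hc with rfl | hc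
            · exact (K.mem_neighborFinset s c).mpr hadj_xs.symm
            · rcases Finset.mem_insert.mp hc with rfl | hc
              · exact (K.mem_neighborFinset s c).mpr ((K.mem_neighborFinset c s).mp hsNb).symm
              · rw [Finset.mem_singleton] at hc
                rw [hc, K.mem_neighborFinset]
                exact hadj_zs.symm
        have hdisjf : Disjoint (K.neighborFinset s ∩ K.neighborFinset x) ({x, b, z} : Finset W) := by
          rw [Finset.disjoint_right]
          intro c hc
          intro hcmem
          have hcNx : c ∈ K.neighborFinset x := (Finset.mem_inter.mp hcmem).2
          rcases Finset.mem_insert.mp hc with rfl | hc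
          · exact K.notMem_neighborFinset_self c hcNx
          · rcases Finset.mem_insert.mp hc with rfl | hc
            · exact hbn'.2 ((K.mem_neighborFinset x c).mp hcNx)
            · rw [Finset.mem_singleton] at hc
              rw [hc] at hcNx
              exact hzNx hcNx
        have hcard_xbz : #({x, b, z} : Finset W) = 3 := by
          rw [Finset.card_insert_of_notMem, Finset.card_pair hadj_bz.ne]
          intro h
          rcases Finset.mem_insert.mp h with h | h
          · exact hxb h
          · rw [Finset.mem_singleton] at h
            exact hzx h.symm
        have hcardf : #((K.neighborFinset s ∩ K.neighborFinset x) ∪ ({x, b, z} : Finset W)) =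
            #(K.neighborFinset s ∩ K.neighborFinset x) + 3 := by
          rw [Finset.card_union_of_disjoint hdisjf, hcard_xbz]
        have hlef := Finset.card_le_card hfinal_sub
        rw [hcardf, hregF s] at hlef
        omega

end Aux

/-- A connected `(t−1)`-regular graph `K` such that `K_1 ∨ K` is
`K_{2,t}`-minor-free must be the complete graph `K_t`. -/
theorem regular_component_is_clique (t : ℕ) (ht : 2 ≤ t) (W : Type) [Fintype W]
    (K : SimpleGraph W) (hconn : K.Connected) (hreg : ∀ v : W, K.degree v = t - 1)
    (hfree : K2tMinorFree t (gJoin (⊤ : SimpleGraph (Fin 1)) K)) :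
    Nonempty (K ≃g (⊤ : SimpleGraph (Fin t))) := by
  exact regular_component_is_clique' t ht W K hconn hreg hfree
end

section
/- For every integer t ≥ 2 there exists N such that for all integers ℓ ≥ 0 and n ≥ N with ℓt ≤ n−1, the graph G_ℓ = K_1 ∨ (ℓ·K_t ∪ (n−1−ℓt)·P_1) satisfies: both λ_max(A(G_ℓ)) and λ_min(A(G_ℓ)) are roots of the cubic equation λ³ − (t−1)λ² − (n−1)λ + (t−1)(n−1−ℓt) = 0. -/
open Finset SimpleGraph Matrix

attribute [local instance] Classical.propDecidable

section Rows
variable {t ℓ m : ℕ}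

lemma row_apex (z : Fin 1 ⊕ ((Fin ℓ × Fin t) ⊕ Fin m) → ℝ) :
    (adjMat (GExt t ℓ m) *ᵥ z) (Sum.inl 0) =
      (∑ p : Fin ℓ × Fin t, z (Sum.inr (Sum.inl p))) + ∑ k : Fin m, z (Sum.inr (Sum.inr k)) := by
  simp [mulVec, dotProduct, Fintype.sum_sum_type, adjMat, GExt, gJoin, gSum, cliques]

lemma row_iso (z : Fin 1 ⊕ ((Fin ℓ × Fin t) ⊕ Fin m) → ℝ) (k : Fin m) :
    (adjMat (GExt t ℓ m) *ᵥ z) (Sum.inr (Sum.inr k)) = z (Sum.inl 0) := by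
  simp [mulVec, dotProduct, Fintype.sum_sum_type, adjMat, GExt, gJoin, gSum, cliques]

end Rows
section Rows
variable {t ℓ m : ℕ}

lemma row_clique (z : Fin 1 ⊕ ((Fin ℓ × Fin t) ⊕ Fin m) → ℝ) (i : Fin ℓ) (j : Fin t) :
    (adjMat (GExt t ℓ m) *ᵥ z) (Sum.inr (Sum.inl (i, j))) =
      z (Sum.inl 0) + ∑ j' ∈ Finset.univ.erase j, z (Sum.inr (Sum.inl (i, j'))) := by
  simp only [mulVec, dotProduct, Fintype.sum_sum_type, Fintype.sum_prod_type]
  simp [adjMat, GExt, gJoin, gSum, cliques, ite_and]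
  rw [eq_sub_iff_add_eq]
  have h1 : z (Sum.inr (Sum.inl (i, j)))
      = ∑ x : Fin t, if j = x then z (Sum.inr (Sum.inl (i, x))) else 0 := by
    rw [Finset.sum_ite_eq]; simp
  rw [h1, ← Finset.sum_add_distrib]
  apply Finset.sum_congr rfl
  intro x _
  split <;> simp

end Rows
section Classify
variable {t ℓ m : ℕ}

lemma eig_eqs (μ : ℝ) (z : Fin 1 ⊕ ((Fin ℓ × Fin t) ⊕ Fin m) → ℝ)
    (he : adjMat (GExt t ℓ m) *ᵥ z = μ • z) :
    ((∑ p : Fin ℓ × Fin t, z (Sum.inr (Sum.inl p))) + ∑ k : Fin m, z (Sum.inr (Sum.inr k))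
        = μ * z (Sum.inl 0)) ∧
    (∀ i j, z (Sum.inl 0) + ((∑ j' : Fin t, z (Sum.inr (Sum.inl (i, j')))) -
        z (Sum.inr (Sum.inl (i, j)))) = μ * z (Sum.inr (Sum.inl (i, j)))) ∧
    (∀ k, z (Sum.inl 0) = μ * z (Sum.inr (Sum.inr k))) := by
  refine ⟨?_, fun i j => ?_, fun k => ?_⟩
  · have h := congrFun he (Sum.inl 0)
    rwa [row_apex, Pi.smul_apply, smul_eq_mul] at h
  · have h := congrFun he (Sum.inr (Sum.inl (i, j)))
    rwa [row_clique, Pi.smul_apply, smul_eq_mul,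
      Finset.sum_erase_eq_sub (Finset.mem_univ j)] at h
  · have h := congrFun he (Sum.inr (Sum.inr k))
    rwa [row_iso, Pi.smul_apply, smul_eq_mul] at h

lemma classify (μ : ℝ) (z : Fin 1 ⊕ ((Fin ℓ × Fin t) ⊕ Fin m) → ℝ) (hz : z ≠ 0)
    (he : adjMat (GExt t ℓ m) *ᵥ z = μ • z)
    (h0 : μ ≠ 0) (h1 : μ + 1 ≠ 0) (h2 : μ - ((t : ℝ) - 1) ≠ 0) :
    μ ^ 3 - ((t : ℝ) - 1) * μ ^ 2 - ((ℓ * t + m : ℕ) : ℝ) * μ + ((t : ℝ) - 1) * m = 0 := by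
  obtain ⟨eqo, eqc, eqi⟩ := eig_eqs μ z he
  have hclique : ∀ i j, (μ - ((t : ℝ) - 1)) * z (Sum.inr (Sum.inl (i, j))) = z (Sum.inl 0) := by
    intro i j
    have hconst : ∀ j', z (Sum.inr (Sum.inl (i, j'))) = z (Sum.inr (Sum.inl (i, j))) := by
      intro j'
      have hj := eqc i j
      have hj' := eqc i j'
      have : (μ + 1) * z (Sum.inr (Sum.inl (i, j'))) = (μ + 1) * z (Sum.inr (Sum.inl (i, j))) := by
        linarith
      exact mul_left_cancel₀ h1 this
    have hS : (∑ j' : Fin t, z (Sum.inr (Sum.inl (i, j')))) = t * z (Sum.inr (Sum.inl (i, j))) := by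
      rw [Finset.sum_congr rfl (fun j' _ => hconst j')]
      simp [mul_comm]
    have hj := eqc i j
    rw [hS] at hj
    linarith
  have hiso : ∀ k, μ * z (Sum.inr (Sum.inr k)) = z (Sum.inl 0) := fun k => (eqi k).symm
  by_cases ho : z (Sum.inl 0) = 0
  · exfalso
    apply hz
    funext v
    rcases v with a | (⟨i, j⟩ | k)
    · have : a = 0 := Subsingleton.elim a 0
      rw [this, ho]; rfl
    · have := hclique i j
      rw [ho] at this
      exact (mul_eq_zero.1 this).resolve_left h2
    · have := hiso k
      rw [ho] at this
      exact (mul_eq_zero.1 this).resolve_left h0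
  · have hzc : ∀ p : Fin ℓ × Fin t,
        z (Sum.inr (Sum.inl p)) = z (Sum.inl 0) / (μ - ((t : ℝ) - 1)) := by
      rintro ⟨i, j⟩
      rw [eq_div_iff h2, mul_comm]
      exact hclique i j
    have hzi : ∀ k, z (Sum.inr (Sum.inr k)) = z (Sum.inl 0) / μ := by
      intro k
      rw [eq_div_iff h0, mul_comm]
      exact hiso k
    rw [Finset.sum_congr rfl (fun p _ => hzc p), Finset.sum_congr rfl (fun k _ => hzi k),
      Finset.sum_const, Finset.sum_const] at eqo
    simp only [Finset.card_univ, Fintype.card_prod, Fintype.card_fin, nsmul_eq_mul] at eqo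
    push_cast at eqo ⊢
    field_simp at eqo
    have hT : (μ ^ 3 - ((t : ℝ) - 1) * μ ^ 2 - ((ℓ : ℝ) * t + m) * μ + ((t : ℝ) - 1) * m)
        * z (Sum.inl 0) = 0 := by linear_combination -(z (Sum.inl 0)) * eqo
    have := (mul_eq_zero.1 hT).resolve_right ho
    linarith

end Classify
section Construct
variable {t ℓ m : ℕ}

lemma construct (ht : 2 ≤ t) (μ : ℝ)
    (hP : μ ^ 3 - ((t : ℝ) - 1) * μ ^ 2 - ((ℓ * t + m : ℕ) : ℝ) * μ + ((t : ℝ) - 1) * m = 0)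
    (h0 : μ ≠ 0) (h2 : μ - ((t : ℝ) - 1) ≠ 0) :
    ∃ z : Fin 1 ⊕ ((Fin ℓ × Fin t) ⊕ Fin m) → ℝ,
      z ≠ 0 ∧ adjMat (GExt t ℓ m) *ᵥ z = μ • z := by
  refine ⟨Sum.elim (fun _ => μ * (μ - ((t : ℝ) - 1)))
    (Sum.elim (fun _ => μ) (fun _ => μ - ((t : ℝ) - 1))), ?_, ?_⟩
  · intro h
    have h' := congrFun h (Sum.inl 0)
    simp only [Sum.elim_inl, Pi.zero_apply] at h'
    exact (mul_ne_zero h0 h2) h'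
  · funext v
    rcases v with a | (⟨i, j⟩ | k)
    · have ha : a = 0 := Subsingleton.elim _ _
      subst ha
      rw [row_apex, Pi.smul_apply, smul_eq_mul]
      simp only [Sum.elim_inl, Sum.elim_inr, Finset.sum_const, Finset.card_univ,
        Fintype.card_prod, Fintype.card_fin, nsmul_eq_mul]
      push_cast at hP ⊢
      linear_combination -hP
    · rw [row_clique, Pi.smul_apply, smul_eq_mul]
      simp only [Sum.elim_inl, Sum.elim_inr, Finset.sum_const, nsmul_eq_mul,
        Finset.card_erase_of_mem (Finset.mem_univ j), Finset.card_univ, Fintype.card_fin]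
      have hcast : ((t - 1 : ℕ) : ℝ) = (t : ℝ) - 1 := by
        have : 1 ≤ t := le_trans (by norm_num) ht
        push_cast [this]; ring
      rw [hcast]
      ring
    · rw [row_iso, Pi.smul_apply, smul_eq_mul]
      simp only [Sum.elim_inl, Sum.elim_inr]

end Construct
section Main

open Polynomial in
lemma specSet_finite (t ℓ m n : ℕ) (ht : 2 ≤ t)
    (hcast1 : ((ℓ * t + m : ℕ) : ℝ) = (n : ℝ) - 1) :
    {μ : ℝ | ∃ z : Fin 1 ⊕ ((Fin ℓ × Fin t) ⊕ Fin m) → ℝ,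
      z ≠ 0 ∧ adjMat (GExt t ℓ m) *ᵥ z = μ • z}.Finite := by
  set q : ℝ[X] := X * (X + C 1) * (X - C ((t : ℝ) - 1)) *
    (X ^ 3 + (-(C ((t : ℝ) - 1) * X ^ 2) - C ((n : ℝ) - 1) * X + C (((t : ℝ) - 1) * m)))
    with hq
  have hmon : q.Monic := by
    refine (((monic_X.mul (monic_X_add_C 1)).mul (monic_X_sub_C _)).mul ?_)
    apply monic_X_pow_add
    refine lt_of_le_of_lt ?_ (by norm_num : (2 : WithBot ℕ) < 3)
    compute_degree
  apply (Polynomial.finite_setOf_isRoot hmon.ne_zero).subset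
  rintro μ ⟨z, hz, he⟩
  show q.IsRoot μ
  have heval : q.eval μ = μ * (μ + 1) * (μ - ((t : ℝ) - 1)) *
      (μ ^ 3 - ((t : ℝ) - 1) * μ ^ 2 - ((n : ℝ) - 1) * μ + ((t : ℝ) - 1) * m) := by
    simp only [hq, eval_mul, eval_add, eval_sub, eval_pow, eval_neg, eval_X, eval_C,
      eval_one]; ring
  rw [IsRoot, heval]
  by_cases h0 : μ = 0
  · rw [h0]; ring
  by_cases h1 : μ + 1 = 0
  · rw [show μ = -1 by linarith]; ring
  by_cases h2 : μ - ((t : ℝ) - 1) = 0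
  · rw [show μ = (t : ℝ) - 1 by linarith]; ring
  have hP := classify μ z hz he h0 h1 h2
  rw [hcast1] at hP
  rw [hP]; ring

end Main
set_option maxHeartbeats 1000000 in
/-- For large `n`, both extreme adjacency eigenvalues of
`G_ℓ = K_1 ∨ (ℓ K_t ∪ (n−1−ℓt) P_1)` are roots of
`λ³ − (t−1)λ² − (n−1)λ + (t−1)(n−1−ℓt) = 0`. -/
theorem extremal_graph_cubic (t : ℕ) (ht : 2 ≤ t) :
    ∃ N : ℕ, ∀ (ℓ n : ℕ), N ≤ n → ℓ * t ≤ n - 1 →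
      (lamMax (GExt t ℓ (n - 1 - ℓ * t)) ^ 3
          - ((t : ℝ) - 1) * lamMax (GExt t ℓ (n - 1 - ℓ * t)) ^ 2
          - ((n : ℝ) - 1) * lamMax (GExt t ℓ (n - 1 - ℓ * t))
          + ((t : ℝ) - 1) * ((n : ℝ) - 1 - (ℓ : ℝ) * t) = 0) ∧
      (lamMin (GExt t ℓ (n - 1 - ℓ * t)) ^ 3
          - ((t : ℝ) - 1) * lamMin (GExt t ℓ (n - 1 - ℓ * t)) ^ 2
          - ((n : ℝ) - 1) * lamMin (GExt t ℓ (n - 1 - ℓ * t))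
          + ((t : ℝ) - 1) * ((n : ℝ) - 1 - (ℓ : ℝ) * t) = 0) := by
  refine ⟨t * t + t + 4, fun ℓ n hn hl => ?_⟩
  set m : ℕ := n - 1 - ℓ * t with hm
  -- numeric facts
  have ht1 : (1 : ℕ) ≤ t := by omega
  have hn1 : (1 : ℕ) ≤ n := le_trans (by norm_num) (le_trans (Nat.le_add_left 4 (t * t + t)) hn)
  have hmeq : ℓ * t + m = n - 1 := by omega
  have hcast1 : ((ℓ * t + m : ℕ) : ℝ) = (n : ℝ) - 1 := by
    rw [hmeq]; push_cast [hn1]; ring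
  have hcast2 : (m : ℝ) = (n : ℝ) - 1 - (ℓ : ℝ) * t := by
    have : m = n - 1 - ℓ * t := hm
    rw [this]
    push_cast [hl, hn1]
    ring
  have htR : (2 : ℝ) ≤ (t : ℝ) := by exact_mod_cast ht
  have hnR : (t : ℝ) * t + t + 4 ≤ (n : ℝ) := by exact_mod_cast hn
  have hmR0 : (0 : ℝ) ≤ (m : ℝ) := Nat.cast_nonneg m
  have hltR : (ℓ : ℝ) * t ≤ (n : ℝ) - 1 := by
    have h := hmR0
    rw [hcast2] at h
    linarith
  have hmRle : (m : ℝ) ≤ (n : ℝ) - 1 := by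
    rw [hcast2]
    have h0lt : (0 : ℝ) ≤ (ℓ : ℝ) * t := by positivity
    linarith
  -- the cubic
  set P : ℝ → ℝ := fun x => x ^ 3 - ((t : ℝ) - 1) * x ^ 2 - ((n : ℝ) - 1) * x
      + ((t : ℝ) - 1) * ((n : ℝ) - 1 - (ℓ : ℝ) * t) with hP
  have hPcont : Continuous P := by rw [hP]; fun_prop
  -- spectrum
  set S : Set ℝ := {μ : ℝ | ∃ z : Fin 1 ⊕ ((Fin ℓ × Fin t) ⊕ Fin m) → ℝ,
      z ≠ 0 ∧ adjMat (GExt t ℓ m) *ᵥ z = μ • z} with hS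
  have hSfin : S.Finite := specSet_finite t ℓ m n ht hcast1
  have hmemS : ∀ μ : ℝ, P μ = 0 → (t : ℝ) - 1 < μ ∨ μ < -1 → μ ∈ S := by
    intro μ hPμ hside
    have h0 : μ ≠ 0 := by rcases hside with h | h <;> intro h' <;> rw [h'] at h <;> linarith
    have h2 : μ - ((t : ℝ) - 1) ≠ 0 := by
      rcases hside with h | h <;> intro h' <;> nlinarith
    obtain ⟨z, hz, he⟩ := construct ht μ
      (by rw [hcast1, hcast2]; simpa only [hP] using hPμ) h0 h2
    exact ⟨z, hz, he⟩
  -- every eigenvalue is a root of the quartic-killer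
  have hclass : ∀ μ ∈ S, μ ≠ 0 → μ + 1 ≠ 0 → μ - ((t : ℝ) - 1) ≠ 0 → P μ = 0 := by
    rintro μ ⟨z, hz, he⟩ h0 h1 h2
    have := classify μ z hz he h0 h1 h2
    rw [hcast1, hcast2] at this
    simp only [hP]
    linarith [this]
  -- a large root
  have hmaxroot : ∃ μ : ℝ, P μ = 0 ∧ (t : ℝ) - 1 < μ := by
    rcases Nat.eq_zero_or_pos ℓ with hl0 | hl1
    · refine ⟨Real.sqrt ((n : ℝ) - 1), ?_, ?_⟩
      · have hsq : Real.sqrt ((n : ℝ) - 1) ^ 2 = (n : ℝ) - 1 :=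
          Real.sq_sqrt (by nlinarith)
        simp only [hP, hl0, Nat.cast_zero]
        linear_combination (Real.sqrt ((n : ℝ) - 1) - ((t : ℝ) - 1)) * hsq
      · rw [Real.lt_sqrt (by nlinarith)]
        nlinarith
    · have hlR : (1 : ℝ) ≤ (ℓ : ℝ) := by exact_mod_cast hl1
      have hab : (t : ℝ) - 1 ≤ (n : ℝ) := by nlinarith
      have hfa : P ((t : ℝ) - 1) < 0 := by
        simp only [hP]
        have hpos : 0 < ((t : ℝ) - 1) * ((ℓ : ℝ) * t) := by
          apply mul_pos (by linarith)
          apply mul_pos (by linarith) (by linarith)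
        nlinarith [hpos]
      have hfb : 0 < P (n : ℝ) := by
        simp only [hP]
        have h1 : (0 : ℝ) ≤ ((t : ℝ) - 1) * ((n : ℝ) - 1 - (ℓ : ℝ) * t) := by
          apply mul_nonneg <;> linarith
        have h3 : 0 ≤ (n : ℝ) ^ 2 * ((n : ℝ) - t) := by
          apply mul_nonneg (sq_nonneg _)
          have ht2 : (0 : ℝ) ≤ (t : ℝ) * (t : ℝ) := mul_self_nonneg _
          linarith
        have h4 : (1 : ℝ) ≤ (n : ℝ) := by exact_mod_cast hn1
        linarith [h1, h3, h4]
      have h0mem : (0 : ℝ) ∈ Set.Icc (P ((t : ℝ) - 1)) (P (n : ℝ)) :=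
        ⟨le_of_lt hfa, le_of_lt hfb⟩
      obtain ⟨μ, hμI, hμP⟩ := intermediate_value_Icc hab hPcont.continuousOn h0mem
      refine ⟨μ, hμP, lt_of_le_of_ne hμI.1 ?_⟩
      intro h
      rw [h] at hfa
      exact absurd hμP (ne_of_lt hfa)
  -- a small root
  have hminroot : ∃ μ : ℝ, P μ = 0 ∧ μ < -1 := by
    have hab : -(n : ℝ) ≤ -1 := by nlinarith
    have hfa : P (-(n : ℝ)) < 0 := by
      simp only [hP]
      have hA : ((t : ℝ) - 1) * ((n : ℝ) - 1 - (ℓ : ℝ) * t) ≤ ((t : ℝ) - 1) * ((n : ℝ) - 1) := by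
        apply mul_le_mul_of_nonneg_left _ (by linarith)
        linarith [Nat.cast_nonneg (α := ℝ) ℓ, mul_nonneg (Nat.cast_nonneg (α := ℝ) ℓ)
          (Nat.cast_nonneg (α := ℝ) t)]
      have hC : ((t : ℝ) - 1) * ((n : ℝ) - 1) ≤ ((t : ℝ) - 1) * (n : ℝ) ^ 2 := by
        apply mul_le_mul_of_nonneg_left _ (by linarith)
        nlinarith
      have hE : (n : ℝ) ^ 2 ≤ (n : ℝ) ^ 3 := by nlinarith
      nlinarith [hA, hC, hE]
    have hfb : 0 < P (-1 : ℝ) := by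
      simp only [hP]
      have h1 : (0 : ℝ) ≤ ((t : ℝ) - 1) * ((n : ℝ) - 1 - (ℓ : ℝ) * t) := by
        apply mul_nonneg <;> linarith
      nlinarith [h1]
    have h0mem : (0 : ℝ) ∈ Set.Icc (P (-(n : ℝ))) (P (-1)) := ⟨le_of_lt hfa, le_of_lt hfb⟩
    obtain ⟨μ, hμI, hμP⟩ := intermediate_value_Icc hab (hPcont.continuousOn) h0mem
    refine ⟨μ, hμP, lt_of_le_of_ne hμI.2 ?_⟩
    intro h
    rw [h] at hμP
    exact absurd hμP.symm (ne_of_lt hfb)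
  obtain ⟨μ₁, hμ₁P, hμ₁gt⟩ := hmaxroot
  obtain ⟨μ₂, hμ₂P, hμ₂lt⟩ := hminroot
  have hμ₁S : μ₁ ∈ S := hmemS μ₁ hμ₁P (Or.inl hμ₁gt)
  have hμ₂S : μ₂ ∈ S := hmemS μ₂ hμ₂P (Or.inr hμ₂lt)
  have hne : S.Nonempty := ⟨μ₁, hμ₁S⟩
  have hmaxmem : sSup S ∈ S := hne.csSup_mem hSfin
  have hminmem : sInf S ∈ S := hne.csInf_mem hSfin
  have hmaxge : μ₁ ≤ sSup S := le_csSup hSfin.bddAbove hμ₁S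
  have hminle : sInf S ≤ μ₂ := csInf_le hSfin.bddBelow hμ₂S
  have hmaxgt : (t : ℝ) - 1 < sSup S := lt_of_lt_of_le hμ₁gt hmaxge
  have hminlt : sInf S < -1 := lt_of_le_of_lt hminle hμ₂lt
  have hPmax : P (sSup S) = 0 := by
    refine hclass _ hmaxmem ?_ ?_ ?_ <;> intro h <;> nlinarith
  have hPmin : P (sInf S) = 0 := by
    refine hclass _ hminmem ?_ ?_ ?_ <;> intro h <;> nlinarith
  have e1 : lamMax (GExt t ℓ m) = sSup S := rfl
  have e2 : lamMin (GExt t ℓ m) = sInf S := rfl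
  constructor
  · rw [e1]
    have h' := hPmax
    simp only [hP] at h'
    linarith [h']
  · rw [e2]
    have h' := hPmin
    simp only [hP] at h'
    linarith [h']
end

section
/- For every integer k ≥ 0 there exists N such that the following holds. Let t = 12k+4, let ℓ0 ≥ 1 be an integer, and let n = 6(3k+1)ℓ0 + 16k² − k − 1 with n ≥ N. For ℓ ∈ {ℓ0−1, ℓ0} set G_ℓ = K_1 ∨ (ℓ·K_t ∪ (n−1−ℓt)·P_1). Then S(G_{ℓ0}) = S(G_{ℓ0−1}). -/
open Finset SimpleGraph Matrix

attribute [local instance] Classical.propDecidable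

section MV
variable {t ℓ m : ℕ} (z : (Fin 1 ⊕ ((Fin ℓ × Fin t) ⊕ Fin m)) → ℝ)

lemma mv_center :
    (adjMat (GExt t ℓ m) *ᵥ z) (Sum.inl 0) =
      (∑ p : Fin ℓ × Fin t, z (Sum.inr (Sum.inl p))) + ∑ q : Fin m, z (Sum.inr (Sum.inr q)) := by
  simp [adjMat, mulVec, dotProduct, GExt, gJoin, gSum, Fintype.sum_sum_type]

lemma mv_pend (q : Fin m) :
    (adjMat (GExt t ℓ m) *ᵥ z) (Sum.inr (Sum.inr q)) = z (Sum.inl 0) := by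
  simp [adjMat, mulVec, dotProduct, GExt, gJoin, gSum, Fintype.sum_sum_type]

lemma mv_clique (i : Fin ℓ) (j : Fin t) :
    (adjMat (GExt t ℓ m) *ᵥ z) (Sum.inr (Sum.inl (i, j))) =
      z (Sum.inl 0) + (∑ j' : Fin t, z (Sum.inr (Sum.inl (i, j')))) - z (Sum.inr (Sum.inl (i, j))) := by
  have a1 : ∀ a, ((GExt t ℓ m).Adj (Sum.inr (Sum.inl (i, j))) (Sum.inl a) ↔ True) :=
    fun _ => iff_of_true trivial trivial
  have a2 : ∀ p, (GExt t ℓ m).Adj (Sum.inr (Sum.inl (i, j))) (Sum.inr (Sum.inl p)) ↔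
      (cliques ℓ t).Adj (i, j) p := fun _ => Iff.rfl
  have a3 : ∀ q, ((GExt t ℓ m).Adj (Sum.inr (Sum.inl (i, j))) (Sum.inr (Sum.inr q)) ↔ False) :=
    fun _ => iff_of_false (fun h => h) id
  simp only [adjMat, mulVec, dotProduct, a1, a2, a3, Fintype.sum_sum_type,
    if_true, if_false, one_mul, zero_mul, Finset.sum_const_zero, add_zero,
    Fin.sum_univ_one, Fintype.sum_prod_type]
  have h1 : ∀ i' : Fin ℓ, ∀ j' : Fin t,
      (if (cliques ℓ t).Adj (i, j) (i', j') then (1:ℝ) else 0) * z (Sum.inr (Sum.inl (i', j')))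
      = (if i = i' then (if j = j' then 0 else z (Sum.inr (Sum.inl (i', j')))) else 0) := by
    intro i' j'
    by_cases h : i = i' <;> by_cases h2 : j = j' <;>
      simp [cliques, h, h2]
  rw [Finset.sum_congr rfl fun i' _ => Finset.sum_congr rfl fun j' _ => h1 i' j']
  have h2 : ∀ i' : Fin ℓ,
      (∑ j' : Fin t, if i = i' then (if j = j' then (0:ℝ) else z (Sum.inr (Sum.inl (i', j')))) else 0)
      = if i = i' then (∑ j' : Fin t, if j = j' then (0:ℝ) else z (Sum.inr (Sum.inl (i', j')))) else 0 := by
    intro i'; split <;> simp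
  rw [Finset.sum_congr rfl fun i' _ => h2 i']
  rw [Finset.sum_ite_eq Finset.univ i fun i' => (∑ j' : Fin t, if j = j' then (0:ℝ) else z (Sum.inr (Sum.inl (i', j'))))]
  have h3 : ∀ j' : Fin t, (if j = j' then (0:ℝ) else z (Sum.inr (Sum.inl (i, j'))))
      = z (Sum.inr (Sum.inl (i, j'))) - (if j = j' then z (Sum.inr (Sum.inl (i, j'))) else 0) := by
    intro j'; split <;> ring
  rw [Finset.sum_congr rfl fun j' _ => h3 j', Finset.sum_sub_distrib,
    Finset.sum_ite_eq Finset.univ j fun j' => z (Sum.inr (Sum.inl (i, j')))]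
  simp only [Finset.mem_univ, if_true]
  ring
end MV

/-- The key cubic polynomial (as a function). -/
noncomputable def cubic (t ℓ m : ℕ) (x : ℝ) : ℝ :=
  x^3 - ((t:ℝ)-1)*x^2 - ((ℓ:ℝ)*t+m)*x + m*((t:ℝ)-1)

/-- Eigenvalue set. -/
def eigSet {V : Type*} [Fintype V] (G : SimpleGraph V) : Set ℝ :=
  {μ : ℝ | ∃ z : V → ℝ, z ≠ 0 ∧ adjMat G *ᵥ z = μ • z}

lemma lamMax_def {V : Type*} [Fintype V] (G : SimpleGraph V) : lamMax G = sSup (eigSet G) := rfl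
lemma lamMin_def {V : Type*} [Fintype V] (G : SimpleGraph V) : lamMin G = sInf (eigSet G) := rfl

section Eig
variable {t ℓ m : ℕ} {μ : ℝ}

lemma eig_of_root (h0 : μ ≠ 0) (ht : μ + 1 - t ≠ 0) (hroot : cubic t ℓ m μ = 0) :
    μ ∈ eigSet (GExt t ℓ m) := by
  refine ⟨Sum.elim (fun _ => 1) (Sum.elim (fun _ => (μ+1-(t:ℝ))⁻¹) (fun _ => μ⁻¹)), ?_, ?_⟩
  · intro hz
    have : (1:ℝ) = 0 := congrFun hz (Sum.inl 0)
    norm_num at this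
  · funext v
    have hc : μ^3 - ((t:ℝ)-1)*μ^2 - ((ℓ:ℝ)*t+m)*μ + m*((t:ℝ)-1) = 0 := hroot
    rcases v with v | p
    · rw [show (Sum.inl v : Fin 1 ⊕ ((Fin ℓ × Fin t) ⊕ Fin m)) = Sum.inl 0 from by
        congr; exact Subsingleton.elim _ _]
      rw [mv_center]
      simp only [Sum.elim_inr, Sum.elim_inl, Pi.smul_apply, smul_eq_mul,
        Finset.sum_const, Finset.card_univ, Fintype.card_prod, Fintype.card_fin,
        nsmul_eq_mul, mul_one]
      field_simp
      push_cast
      first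
        | linear_combination hc
        | linear_combination -hc
        | linear_combination μ * hc
        | linear_combination -μ * hc
        | linear_combination (μ+1-(t:ℝ)) * hc
        | linear_combination -(μ+1-(t:ℝ)) * hc
    · rcases p with ⟨i, j⟩ | q
      · rw [mv_clique]
        simp only [Sum.elim_inr, Sum.elim_inl, Pi.smul_apply, smul_eq_mul,
          Finset.sum_const, Finset.card_univ, Fintype.card_fin, nsmul_eq_mul, mul_one]
        field_simp
        try ring
      · rw [mv_pend]
        simp only [Sum.elim_inr, Sum.elim_inl, Pi.smul_apply, smul_eq_mul]
        field_simp

lemma root_of_eig {z : (Fin 1 ⊕ ((Fin ℓ × Fin t) ⊕ Fin m)) → ℝ}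
    (h : adjMat (GExt t ℓ m) *ᵥ z = μ • z) (hz : z ≠ 0)
    (h0 : μ ≠ 0) (ht : μ + 1 - t ≠ 0) (h1 : μ + 1 ≠ 0) :
    cubic t ℓ m μ = 0 := by
  set z0 := z (Sum.inl 0) with hz0def
  have hpend : ∀ q : Fin m, z (Sum.inr (Sum.inr q)) = z0 / μ := by
    intro q
    have hq := congrFun h (Sum.inr (Sum.inr q))
    rw [mv_pend] at hq
    simp only [Pi.smul_apply, smul_eq_mul] at hq
    field_simp
    first | linear_combination hq | linear_combination -hq
  have hS : ∀ i : Fin ℓ, (∑ j : Fin t, z (Sum.inr (Sum.inl (i, j)))) = t * z0 / (μ + 1 - t) := by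
    intro i
    have hsum : ∀ j : Fin t, z0 + (∑ j' : Fin t, z (Sum.inr (Sum.inl (i, j')))) -
        z (Sum.inr (Sum.inl (i, j))) = μ * z (Sum.inr (Sum.inl (i, j))) := by
      intro j
      have hj := congrFun h (Sum.inr (Sum.inl (i, j)))
      rw [mv_clique] at hj
      simpa using hj
    set S := ∑ j' : Fin t, z (Sum.inr (Sum.inl (i, j'))) with hSdef
    have hsum2 : (∑ j : Fin t, (z0 + S - z (Sum.inr (Sum.inl (i, j)))))
        = ∑ j : Fin t, μ * z (Sum.inr (Sum.inl (i, j))) := Finset.sum_congr rfl fun j _ => hsum j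
    rw [Finset.sum_sub_distrib, Finset.sum_const, ← Finset.mul_sum, ← hSdef] at hsum2
    simp only [Finset.card_univ, Fintype.card_fin, nsmul_eq_mul] at hsum2
    field_simp
    first | linear_combination hsum2 | linear_combination -hsum2
  have hcl : ∀ i : Fin ℓ, ∀ j : Fin t,
      z (Sum.inr (Sum.inl (i, j))) = (z0 + t * z0 / (μ + 1 - t)) / (μ + 1) := by
    intro i j
    have hj := congrFun h (Sum.inr (Sum.inl (i, j)))
    rw [mv_clique] at hj
    simp only [Pi.smul_apply, smul_eq_mul] at hj
    rw [hS i] at hj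
    field_simp at hj ⊢
    first
    | linear_combination hj
    | linear_combination -hj
    | linear_combination (μ+1-(t:ℝ)) * hj
    | linear_combination -(μ+1-(t:ℝ)) * hj
    | linear_combination μ * hj
    | linear_combination -μ * hj
  have hz0 : z0 ≠ 0 := by
    intro hcontra
    apply hz
    funext v
    rcases v with v | p
    · rw [show (Sum.inl v : Fin 1 ⊕ ((Fin ℓ × Fin t) ⊕ Fin m)) = Sum.inl 0 from by
        congr; exact Subsingleton.elim _ _]
      exact hcontra
    · rcases p with ⟨i, j⟩ | q
      · rw [hcl i j, hcontra]; simp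
      · rw [hpend q, hcontra]; simp
  have hcen := congrFun h (Sum.inl 0)
  rw [mv_center] at hcen
  simp only [Pi.smul_apply, smul_eq_mul] at hcen
  rw [Fintype.sum_prod_type] at hcen
  rw [Finset.sum_congr rfl fun i _ => hS i] at hcen
  rw [Finset.sum_congr rfl fun q _ => hpend q] at hcen
  simp only [Finset.sum_const, Finset.card_univ, Fintype.card_fin, nsmul_eq_mul] at hcen
  rw [← hz0def] at hcen
  have key : z0 * (μ^3 - ((t:ℝ)-1)*μ^2 - ((ℓ:ℝ)*t+m)*μ + m*((t:ℝ)-1)) = 0 := by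
    field_simp at hcen
    first
    | linear_combination hcen
    | linear_combination -hcen
    | linear_combination μ * hcen
    | linear_combination -μ * hcen
    | linear_combination -z0 * hcen
  have := (mul_eq_zero.mp key).resolve_left hz0
  exact this
end Eig

section Spec
variable (t ℓ m : ℕ)

lemma cubic_cont : Continuous (cubic t ℓ m) := by
  unfold cubic; continuity

lemma cubic_finite : {x : ℝ | cubic t ℓ m x = 0}.Finite := by
  set P : Polynomial ℝ :=
    Polynomial.X^3 - Polynomial.C ((t:ℝ)-1) * Polynomial.X^2
      - Polynomial.C ((ℓ:ℝ)*t+m) * Polynomial.X + Polynomial.C ((m:ℝ)*((t:ℝ)-1)) with hP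
  have heval : ∀ x : ℝ, P.eval x = cubic t ℓ m x := by
    intro x; simp [hP, cubic]
  have hdeg : P.natDegree = 3 := by
    rw [hP]; compute_degree!
  have hP0 : P ≠ 0 := by
    intro h
    rw [h] at hdeg
    simp at hdeg
  have := Polynomial.finite_setOf_isRoot hP0
  refine this.subset ?_
  intro x hx
  simp only [Set.mem_setOf_eq, Polynomial.IsRoot, heval]
  exact hx

variable {t ℓ m}

lemma exists_root_ge (ht2 : 2 ≤ t) (hbig : (t:ℝ)^2 < (ℓ:ℝ)*t + m) :
    ∃ x : ℝ, cubic t ℓ m x = 0 ∧ (t:ℝ) ≤ x := by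
  set M : ℝ := (t:ℝ) + ((ℓ:ℝ)*t + m) + 1 with hM
  have ht1 : (1:ℝ) ≤ (t:ℝ) := by exact_mod_cast Nat.one_le_of_lt ht2
  have hm0 : (0:ℝ) ≤ (m:ℝ) := Nat.cast_nonneg m
  have hl0 : (0:ℝ) ≤ (ℓ:ℝ) := Nat.cast_nonneg ℓ
  have hs0 : (0:ℝ) ≤ (ℓ:ℝ)*t + m := by positivity
  have hft : cubic t ℓ m t ≤ 0 := by
    unfold cubic
    nlinarith [hbig, mul_nonneg hl0 (le_trans zero_le_one ht1)]
  have hfM : 0 ≤ cubic t ℓ m M := by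
    unfold cubic
    nlinarith [hs0, ht1, hm0, sq_nonneg M, mul_nonneg hm0 (sub_nonneg.mpr ht1)]
  have htM : (t:ℝ) ≤ M := by simp [hM]; linarith
  have := intermediate_value_Icc htM ((cubic_cont t ℓ m).continuousOn)
  have h0mem : (0:ℝ) ∈ Set.Icc (cubic t ℓ m t) (cubic t ℓ m M) := ⟨hft, hfM⟩
  obtain ⟨x, hx, hfx⟩ := this h0mem
  exact ⟨x, hfx, hx.1⟩

lemma exists_root_lt (ht2 : 2 ≤ t) (hbig : (t:ℝ)^2 < (ℓ:ℝ)*t + m) :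
    ∃ x : ℝ, cubic t ℓ m x = 0 ∧ x < -1 := by
  set s : ℝ := (ℓ:ℝ)*t + m with hs
  set M : ℝ := s + (m:ℝ)*t + 1 with hM
  have ht1 : (1:ℝ) ≤ (t:ℝ) := by exact_mod_cast Nat.one_le_of_lt ht2
  have ht2' : (2:ℝ) ≤ (t:ℝ) := by exact_mod_cast ht2
  have hm0 : (0:ℝ) ≤ (m:ℝ) := Nat.cast_nonneg m
  have hl0 : (0:ℝ) ≤ (ℓ:ℝ) := Nat.cast_nonneg ℓ
  have hs0 : (0:ℝ) ≤ s := by rw [hs]; positivity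
  have hM1 : (1:ℝ) ≤ M := by rw [hM]; nlinarith
  have hfM : cubic t ℓ m (-M) ≤ 0 := by
    unfold cubic
    nlinarith [hM1, hs0, hm0, ht1, sq_nonneg M, mul_nonneg hm0 (le_trans zero_le_one ht1)]
  have hf1 : 0 < cubic t ℓ m (-1) := by
    unfold cubic
    nlinarith [hbig, mul_nonneg hm0 (sub_nonneg.mpr ht1), ht2']
  have htM : -M ≤ (-1:ℝ) := by linarith
  have := intermediate_value_Icc htM ((cubic_cont t ℓ m).continuousOn)
  have h0mem : (0:ℝ) ∈ Set.Icc (cubic t ℓ m (-M)) (cubic t ℓ m (-1)) := ⟨hfM, le_of_lt hf1⟩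
  obtain ⟨x, hx, hfx⟩ := this h0mem
  refine ⟨x, hfx, lt_of_le_of_ne hx.2 ?_⟩
  intro hcontra
  rw [hcontra] at hfx
  linarith

lemma spec_eq (ht2 : 2 ≤ t) (hbig : (t:ℝ)^2 < (ℓ:ℝ)*t + m) :
    lamMax (GExt t ℓ m) = sSup {x : ℝ | cubic t ℓ m x = 0} ∧
    lamMin (GExt t ℓ m) = sInf {x : ℝ | cubic t ℓ m x = 0} := by
  set R : Set ℝ := {x : ℝ | cubic t ℓ m x = 0} with hR
  have hRfin : R.Finite := cubic_finite t ℓ m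
  obtain ⟨x1, hx1root, hx1ge⟩ := exists_root_ge ht2 hbig
  obtain ⟨y1, hy1root, hy1lt⟩ := exists_root_lt ht2 hbig
  have hRne : R.Nonempty := ⟨x1, hx1root⟩
  have hbddA : BddAbove R := hRfin.bddAbove
  have hbddB : BddBelow R := hRfin.bddBelow
  have hr1mem : sSup R ∈ R := hRne.csSup_mem hRfin
  have hr3mem : sInf R ∈ R := hRne.csInf_mem hRfin
  have ht1 : (1:ℝ) ≤ (t:ℝ) := by exact_mod_cast Nat.one_le_of_lt ht2
  have hr1ge : (t:ℝ) ≤ sSup R := le_trans hx1ge (le_csSup hbddA hx1root)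
  have hr3lt : sInf R < -1 := lt_of_le_of_lt (csInf_le hbddB hy1root) hy1lt
  have hr1E : sSup R ∈ eigSet (GExt t ℓ m) := by
    apply eig_of_root (by linarith) (by linarith) hr1mem
  have hr3E : sInf R ∈ eigSet (GExt t ℓ m) := by
    apply eig_of_root (by linarith) (by linarith) hr3mem
  have hsub : ∀ μ ∈ eigSet (GExt t ℓ m), sInf R ≤ μ ∧ μ ≤ sSup R := by
    rintro μ ⟨z, hz, hzeq⟩
    by_cases h0 : μ = 0
    · subst h0; constructor <;> linarith
    by_cases hμt : μ + 1 - t = 0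
    · have : μ = (t:ℝ) - 1 := by linarith
      subst this; constructor <;> linarith
    by_cases hμ1 : μ + 1 = 0
    · have : μ = -1 := by linarith
      subst this; constructor <;> linarith
    have hroot : cubic t ℓ m μ = 0 := root_of_eig hzeq hz h0 hμt hμ1
    exact ⟨csInf_le hbddB hroot, le_csSup hbddA hroot⟩
  constructor
  · rw [lamMax_def]
    apply le_antisymm
    · exact csSup_le ⟨_, hr1E⟩ fun μ hμ => (hsub μ hμ).2
    · exact le_csSup ⟨sSup R, fun μ hμ => (hsub μ hμ).2⟩ hr1E
  · rw [lamMin_def]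
    apply le_antisymm
    · exact csInf_le ⟨sInf R, fun μ hμ => (hsub μ hμ).1⟩ hr3E
    · exact le_csInf ⟨_, hr3E⟩ fun μ hμ => (hsub μ hμ).1
end Spec

lemma spread_reflect {t ℓ m ℓ' m' : ℕ} (ht2 : 2 ≤ t)
    (hbig : (t:ℝ)^2 < (ℓ:ℝ)*t + m) (hbig' : (t:ℝ)^2 < (ℓ':ℝ)*t + m')
    {a : ℝ} (hrefl : ∀ x, cubic t ℓ' m' x = -(cubic t ℓ m (a - x))) :
    spread (GExt t ℓ' m') = spread (GExt t ℓ m) := by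
  obtain ⟨hmax, hmin⟩ := spec_eq ht2 hbig
  obtain ⟨hmax', hmin'⟩ := spec_eq ht2 hbig'
  set R : Set ℝ := {x : ℝ | cubic t ℓ m x = 0} with hRdef
  set R' : Set ℝ := {x : ℝ | cubic t ℓ' m' x = 0} with hR'def
  have hRfin : R.Finite := cubic_finite t ℓ m
  have hR'fin : R'.Finite := cubic_finite t ℓ' m'
  obtain ⟨x1, hx1, _⟩ := exists_root_ge ht2 hbig
  have hRne : R.Nonempty := ⟨x1, hx1⟩
  obtain ⟨x1', hx1', _⟩ := exists_root_ge ht2 hbig'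
  have hR'ne : R'.Nonempty := ⟨x1', hx1'⟩
  have hmem : ∀ x : ℝ, x ∈ R' ↔ a - x ∈ R := by
    intro x
    simp only [hRdef, hR'def, Set.mem_setOf_eq, hrefl x, neg_eq_zero]
  have hinf : a - (a - sInf R) = sInf R := by ring
  have hsup : a - (a - sSup R) = sSup R := by ring
  have h1 : sSup R' = a - sInf R := by
    apply le_antisymm
    · apply csSup_le hR'ne
      intro x hx
      have := csInf_le hRfin.bddBelow ((hmem x).mp hx)
      linarith
    · apply le_csSup hR'fin.bddAbove
      rw [hmem, hinf]
      exact hRne.csInf_mem hRfin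
  have h2 : sInf R' = a - sSup R := by
    apply le_antisymm
    · apply csInf_le hR'fin.bddBelow
      rw [hmem, hsup]
      exact hRne.csSup_mem hRfin
    · apply le_csInf hR'ne
      intro x hx
      have := le_csSup hRfin.bddAbove ((hmem x).mp hx)
      linarith
  unfold spread
  rw [hmax, hmin, hmax', hmin', h1, h2]
  ring

/-- In the exceptional case `t = 12k+4`, `n = 6(3k+1)ℓ₀ + 16k² − k − 1`,
the two candidate extremal graphs have equal spread. -/
theorem exceptional_case_equal_spread (k : ℕ) :
    ∃ N : ℕ, ∀ (ℓ0 n : ℕ), 1 ≤ ℓ0 →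
      (n : ℤ) = 6 * (3 * (k : ℤ) + 1) * ℓ0 + 16 * (k : ℤ) ^ 2 - k - 1 → N ≤ n →
      spread (GExt (12 * k + 4) ℓ0 (n - 1 - ℓ0 * (12 * k + 4))) =
        spread (GExt (12 * k + 4) (ℓ0 - 1) (n - 1 - (ℓ0 - 1) * (12 * k + 4))) := by
  refine ⟨(12*k+4)^2 + 2, ?_⟩
  intro ℓ0 n hl0 hn hN
  set t : ℕ := 12*k+4 with hts
  set m0 : ℕ := n - 1 - ℓ0 * t with hm0def
  set m1 : ℕ := n - 1 - (ℓ0 - 1) * t with hm1def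
  have hl0Z : (1:ℤ) ≤ (ℓ0:ℤ) := by exact_mod_cast hl0
  have htleZ : (1:ℤ) + (ℓ0:ℤ) * t ≤ (n:ℤ) := by
    rw [hn]
    push_cast [hts]
    nlinarith [sq_nonneg (k:ℤ), hl0Z, Int.ofNat_nonneg k,
      mul_nonneg (sub_nonneg.mpr hl0Z) (by positivity : (0:ℤ) ≤ 6*(k:ℤ)+2)]
  have htle : 1 + ℓ0 * t ≤ n := by exact_mod_cast htleZ
  have htq : t ≤ ℓ0 * t := Nat.le_mul_of_pos_left t hl0
  have hmul : (ℓ0 - 1) * t = ℓ0 * t - t := by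
    rw [Nat.sub_mul, one_mul]
  -- casts of m0, m1
  have e0 : m0 + (1 + ℓ0 * t) = n := by
    rw [hm0def]
    generalize hq : ℓ0 * t = q at htle ⊢
    omega
  have e1 : m1 + (1 + ℓ0 * t) = n + t := by
    rw [hm1def, hmul]
    generalize hq : ℓ0 * t = q at htle htq ⊢
    omega
  have htR : (t:ℝ) = 12*(k:ℝ)+4 := by rw [hts]; push_cast; ring
  have e0R : (m0:ℝ) = (n:ℝ) - 1 - (ℓ0:ℝ) * t := by
    have h0 := congrArg (fun x : ℕ => (x:ℝ)) e0
    push_cast at h0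
    rw [htR]
    linear_combination h0 - (ℓ0:ℝ) * htR
  have e1R : (m1:ℝ) = (m0:ℝ) + t := by
    have h0 := congrArg (fun x : ℕ => (x:ℝ)) e0
    have h1 := congrArg (fun x : ℕ => (x:ℝ)) e1
    push_cast at h0 h1
    rw [htR]
    linear_combination h1 - h0 + htR
  have hl0R : ((ℓ0 - 1 : ℕ):ℝ) = (ℓ0:ℝ) - 1 := by
    push_cast [hl0]
    ring
  have hnR : (n:ℝ) = 6*(3*(k:ℝ)+1)*(ℓ0:ℝ) + 16*(k:ℝ)^2 - k - 1 := by
    have := congrArg (fun z : ℤ => (z:ℝ)) hn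
    push_cast at this
    linarith
  have ht2 : 2 ≤ t := by omega
  have hNR : ((t:ℝ))^2 + 2 ≤ (n:ℝ) := by
    have : (t^2 + 2 : ℕ) ≤ n := by rw [hts]; exact hN
    exact_mod_cast this
  have hbig : (t:ℝ)^2 < (ℓ0:ℝ)*t + m0 := by
    rw [e0R]; linarith
  have hbig' : (t:ℝ)^2 < ((ℓ0 - 1 : ℕ):ℝ)*t + m1 := by
    rw [hl0R, e1R, e0R]
    have hexp : ((ℓ0:ℝ)-1)*(t:ℝ) + ((n:ℝ)-1-(ℓ0:ℝ)*(t:ℝ)+(t:ℝ)) = (n:ℝ)-1 := by ring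
    linarith [hNR, hexp]
  have hrefl : ∀ x : ℝ, cubic t (ℓ0 - 1) m1 x = -(cubic t ℓ0 m0 (8*(k:ℝ)+2 - x)) := by
    intro x
    unfold cubic
    rw [hl0R, e1R, e0R, htR, hnR]
    ring
  exact (spread_reflect ht2 hbig hbig' hrefl).symm
end
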